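/- Let A be a periodic abelian group with trivial 2-component and with no cocyclic p-components. Call a non-central involution ξ ∈ Aut A normal if there is exactly one prime p such that the restriction of ξ to A_p is not central in Aut A_p. Then a non-central involution ξ is normal if and only if there exists an extremal involution ε commuting with ξ such that: (i) some extremal involution ε₁ belonging to the same p-component as ε does not commute with ξ, and (ii) every extremal involution ε₂ belonging to a different p-component than ε commutes with ξ. -/

import Mathlib

/-- The `p`-component of an abelian group: the subgroup of elements of `p`-power order. -/
def pComponent (A : Type*) [AddCommGroup A] (p : ℕ) : AddSubgroup A where
  carrier := {a | ∃ n : ℕ, p ^ n • a = 0}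
  zero_mem' := ⟨0, smul_zero _⟩
  add_mem' := by
    rintro a b ⟨n, hn⟩ ⟨m, hm⟩
    refine ⟨n + m, ?_⟩
    have ha : p ^ (n + m) • a = 0 := by
      rw [pow_add, mul_comm, mul_smul, hn, smul_zero]
    have hb : p ^ (n + m) • b = 0 := by
      rw [pow_add, mul_smul, hm, smul_zero]
    rw [smul_add, ha, hb, add_zero]
  neg_mem' := by
    rintro a ⟨n, hn⟩
    exact ⟨n, by rw [smul_neg, hn, neg_zero]⟩


/-- A nontrivial abelian group is cocyclic if it has a nontrivial subgroup contained in
every nontrivial subgroup. -/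
def IsCocyclic (G : Type*) [AddCommGroup G] : Prop :=
  ∃ H : AddSubgroup G, H ≠ ⊥ ∧ ∀ K : AddSubgroup G, K ≠ ⊥ → H ≤ K

/-- For an involution `ε`, the subgroup `A_ε^+ = {a | ε a = a}` of fixed points. -/
def posPart {A : Type*} [AddCommGroup A] (ε : AddAut A) : AddSubgroup A where
  carrier := {a | ε a = a}
  zero_mem' := map_zero ε
  add_mem' := by
    intro a b ha hb
    simp only [Set.mem_setOf_eq] at *
    rw [map_add, ha, hb]
  neg_mem' := by
    intro a ha
    simp only [Set.mem_setOf_eq] at *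
    rw [map_neg, ha]

/-- For an involution `ε`, the subgroup `A_ε^- = {a | ε a = -a}`. -/
def negPart {A : Type*} [AddCommGroup A] (ε : AddAut A) : AddSubgroup A where
  carrier := {a | ε a = -a}
  zero_mem' := by simp
  add_mem' := by
    intro a b ha hb
    simp only [Set.mem_setOf_eq] at *
    rw [map_add, ha, hb, neg_add]
  neg_mem' := by
    intro a ha
    simp only [Set.mem_setOf_eq] at *
    rw [map_neg, ha]

/-- A subgroup is indecomposable if it is nonzero and is not the (internal) direct sum
of two nonzero subgroups. -/
def Indecomp {A : Type*} [AddCommGroup A] (B : AddSubgroup A) : Prop :=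
  B ≠ ⊥ ∧ ¬ ∃ C D : AddSubgroup A, C ≠ ⊥ ∧ D ≠ ⊥ ∧ C ⊓ D = ⊥ ∧ C ⊔ D = B

/-- `ExtremalWith ε B Bp` says that `ε` is an extremal involution whose indecomposable
summand `A_ε` is `B` and whose complementary summand `A_ε^⊥` is `Bp`: `ε² = 1`, `B` is
one of the two summands `A_ε^+`, `A_ε^-` (and `Bp` the other one), and `B` is
indecomposable. -/
def ExtremalWith {A : Type*} [AddCommGroup A] (ε : AddAut A) (B Bp : AddSubgroup A) :
    Prop :=
  ε + ε = 0 ∧ Indecomp B ∧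
    ((B = posPart ε ∧ Bp = negPart ε) ∨ (B = negPart ε ∧ Bp = posPart ε))

/-- An involution is extremal if one of its two summands is indecomposable. -/
def IsExtremal {A : Type*} [AddCommGroup A] (ε : AddAut A) : Prop :=
  ∃ B Bp : AddSubgroup A, ExtremalWith ε B Bp

theorem map_mem_pComponent {A : Type*} [AddCommGroup A] (ξ : AddAut A) (p : ℕ) {a : A}
    (h : a ∈ pComponent A p) : ξ a ∈ pComponent A p := by
  obtain ⟨n, hn⟩ := h
  exact ⟨n, by rw [← map_nsmul ξ, hn, map_zero]⟩

/-- The restriction of an automorphism of `A` to the `p`-component `A_p`. -/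
def restrictComp {A : Type*} [AddCommGroup A] (ξ : AddAut A) (p : ℕ) :
    AddAut ↥(pComponent A p) where
  toFun a := ⟨ξ a, map_mem_pComponent ξ p a.2⟩
  invFun a := ⟨ξ.symm a, map_mem_pComponent ξ.symm p a.2⟩
  left_inv a := Subtype.ext (ξ.symm_apply_apply a.1)
  right_inv a := Subtype.ext (ξ.apply_symm_apply a.1)
  map_add' a b := Subtype.ext (map_add ξ a.1 b.1)


/-! ### Auxiliary development for Statement 13 -/

section St13Aux

variable {A : Type*} [AddCommGroup A]

theorem St13.mem_pComponent {p : ℕ} {a : A} :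
    a ∈ pComponent A p ↔ ∃ n : ℕ, p ^ n • a = 0 := Iff.rfl

theorem St13.mem_posPart {ε : AddAut A} {a : A} : a ∈ posPart ε ↔ ε a = a := Iff.rfl

theorem St13.mem_negPart {ε : AddAut A} {a : A} : a ∈ negPart ε ↔ ε a = -a := Iff.rfl

theorem St13.zpow_smul_eq {p n : ℕ} (a : A) : ((p : ℤ)) ^ n • a = (p ^ n) • a := by
  have : ((p : ℤ)) ^ n = ((p ^ n : ℕ) : ℤ) := by push_cast; ring
  rw [this, natCast_zsmul]

theorem St13.mem_pComponent_z {p : ℕ} {a : A} :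
    a ∈ pComponent A p ↔ ∃ n : ℕ, ((p : ℤ)) ^ n • a = 0 := by
  simp only [St13.mem_pComponent, St13.zpow_smul_eq]

theorem St13.eq_zero_of_coprime_ann {x : A} {m n : ℤ} (hc : IsCoprime m n)
    (hm : m • x = 0) (hn : n • x = 0) : x = 0 := by
  obtain ⟨α, β, h⟩ := hc
  calc x = (α * m + β * n) • x := by rw [h, one_smul]
    _ = α • (m • x) + β • (n • x) := by rw [add_smul, mul_smul, mul_smul]
    _ = 0 := by rw [hm, hn, smul_zero, smul_zero, add_zero]

theorem St13.coprime_pow_of_not_dvd {p : ℕ} (hp : p.Prime) {k : ℤ} (h : ¬ (p : ℤ) ∣ k)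
    (N : ℕ) : IsCoprime k ((p : ℤ) ^ N) := by
  have : IsCoprime k (p : ℤ) :=
    (((Nat.prime_iff_prime_int.mp hp).coprime_iff_not_dvd).mpr h).symm
  exact this.pow_right

theorem St13.prime_dvd_of_smul_eq_zero {p : ℕ} (hp : p.Prime) {b : A} {N : ℕ}
    (hb : (p : ℤ) ^ N • b = 0) (hb0 : b ≠ 0) {k : ℤ} (hk : k • b = 0) : (p : ℤ) ∣ k := by
  by_contra h
  exact hb0 (St13.eq_zero_of_coprime_ann (St13.coprime_pow_of_not_dvd hp h N) hk hb)

/-- From `2`-torsion-freeness. -/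
theorem St13.two_tf (h2 : pComponent A 2 = ⊥) {a : A} (h : a + a = 0) : a = 0 := by
  have : a ∈ pComponent A 2 := ⟨1, by rw [pow_one]; rw [two_nsmul]; exact h⟩
  rw [h2] at this
  exact AddSubgroup.mem_bot.mp this

theorem St13.exists_half (hA : AddMonoid.IsTorsion A) (h2 : pComponent A 2 = ⊥) (a : A) :
    ∃ b : A, b + b = a := by
  have hfin := hA a
  have hpos : 0 < addOrderOf a := hfin.addOrderOf_pos
  have hodd : ¬ 2 ∣ addOrderOf a := by
    intro ⟨c, hc⟩
    have hc0 : 0 < c := by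
      rcases Nat.eq_zero_or_pos c with h0 | h0
      · omega
      · exact h0
    have h1 : (c • a) + (c • a) = 0 := by
      rw [← two_nsmul, ← mul_nsmul', ← hc, addOrderOf_nsmul_eq_zero]
    have h2' : c • a = 0 := St13.two_tf h2 h1
    have := addOrderOf_dvd_of_nsmul_eq_zero h2'
    have hlt : c < addOrderOf a := by omega
    exact absurd (Nat.le_of_dvd hc0 this) (by omega)
  have : addOrderOf a % 2 = 1 := Nat.odd_iff.mp (Nat.odd_iff.mpr (by omega))
  obtain ⟨k, hk⟩ : ∃ k, addOrderOf a = 2 * k + 1 := ⟨addOrderOf a / 2, by omega⟩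
  refine ⟨(k + 1) • a, ?_⟩
  have : (k + 1) • a + (k + 1) • a = (2 * k + 2) • a := by
    rw [← add_nsmul]; ring_nf
  rw [this]
  have h1 : (2 * k + 2) • a = (2 * k + 1) • a + a := by
    have : 2 * k + 2 = (2 * k + 1) + 1 := by omega
    rw [this, add_nsmul, one_nsmul]
  rw [h1, ← hk, addOrderOf_nsmul_eq_zero, zero_add]

theorem St13.half_unique (h2 : pComponent A 2 = ⊥) {b b' : A} (h : b + b = b' + b') :
    b = b' := by
  have : (b - b') + (b - b') = 0 := by
    have : b + b - (b' + b') = 0 := by rw [h]; abel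
    rw [← this]; abel
  have h0 := St13.two_tf h2 this
  have : b - b' = 0 := h0
  exact sub_eq_zero.mp this

end St13Aux

namespace St13

variable {A : Type*} [AddCommGroup A]

/-- The subgroup of elements with order coprime to `p`. -/
def coprimeComp (A : Type*) [AddCommGroup A] (p : ℕ) : AddSubgroup A where
  carrier := {a | ∃ m : ℕ, Nat.Coprime m p ∧ m • a = 0}
  zero_mem' := ⟨1, Nat.coprime_one_left p, one_nsmul 0⟩
  add_mem' := by
    rintro a b ⟨m, hm, hma⟩ ⟨n, hn, hnb⟩
    refine ⟨m * n, Nat.Coprime.mul hm hn, ?_⟩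
    have ha' : (m * n) • a = 0 := by
      rw [mul_comm, ← smul_smul, hma, smul_zero]
    have hb' : (m * n) • b = 0 := by rw [← smul_smul, hnb, smul_zero]
    rw [smul_add, ha', hb', add_zero]
  neg_mem' := by
    rintro a ⟨m, hm, hma⟩
    exact ⟨m, hm, by rw [smul_neg, hma, neg_zero]⟩

theorem mem_coprimeComp {p : ℕ} {a : A} :
    a ∈ coprimeComp A p ↔ ∃ m : ℕ, Nat.Coprime m p ∧ m • a = 0 := Iff.rfl

theorem pComp_meet_coprimeComp (p : ℕ) :
    pComponent A p ⊓ coprimeComp A p = ⊥ := by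
  rw [eq_bot_iff]
  rintro x ⟨⟨n, hn⟩, ⟨m, hm, hmx⟩⟩
  have hc : IsCoprime ((m : ℤ)) ((p : ℤ) ^ n) := by
    have : Nat.Coprime m (p ^ n) := Nat.Coprime.pow_right n hm
    have h1 : IsCoprime ((m : ℤ)) ((p ^ n : ℕ) : ℤ) := Nat.isCoprime_iff_coprime.mpr this
    rwa [Nat.cast_pow] at h1
  have h1 : ((m : ℤ)) • x = 0 := by rw [natCast_zsmul, hmx]
  have h2 : ((p : ℤ) ^ n) • x = 0 := by rw [zpow_smul_eq, hn]
  exact AddSubgroup.mem_bot.mpr (eq_zero_of_coprime_ann hc h1 h2)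

theorem pComp_le_coprimeComp {p q : ℕ} (hp : p.Prime) (hq : q.Prime) (hne : q ≠ p) :
    pComponent A q ≤ coprimeComp A p := by
  rintro a ⟨n, hn⟩
  refine ⟨q ^ n, Nat.Coprime.pow_left n ((Nat.coprime_primes hq hp).mpr hne), hn⟩

theorem pComp_meet_pComp {p q : ℕ} (hp : p.Prime) (hq : q.Prime) (hne : p ≠ q) :
    pComponent A p ⊓ pComponent A q = ⊥ := by
  rw [eq_bot_iff]
  intro x hx
  have : x ∈ pComponent A p ⊓ coprimeComp A p :=
    ⟨hx.1, pComp_le_coprimeComp hp hq (Ne.symm hne) hx.2⟩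
  rw [pComp_meet_coprimeComp] at this
  exact this

theorem aut_mem_coprimeComp (σ : AddAut A) {p : ℕ} {a : A} (h : a ∈ coprimeComp A p) :
    σ a ∈ coprimeComp A p := by
  obtain ⟨m, hm, hma⟩ := h
  exact ⟨m, hm, by rw [← map_nsmul, hma, map_zero]⟩

/-- Decomposition of any element into `p`-part and coprime part, preserving annihilators. -/
theorem comp_split (hA : AddMonoid.IsTorsion A) {p : ℕ} (hp : p.Prime) (a : A) :
    ∃ b r : A, b ∈ pComponent A p ∧ r ∈ coprimeComp A p ∧ a = b + r ∧
      ∀ n : ℤ, n • a = 0 → n • b = 0 ∧ n • r = 0 := by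
  have hn0 : addOrderOf a ≠ 0 := (hA a).addOrderOf_pos.ne'
  set N := addOrderOf a with hN
  set k := N.factorization p with hk
  set m := N / p ^ k with hm
  have hNm : p ^ k * m = N := Nat.ordProj_mul_ordCompl_eq_self N p
  have hcop : Nat.Coprime p m := Nat.coprime_ordCompl hp hn0
  have hcop2 : IsCoprime ((p : ℤ) ^ k) ((m : ℤ)) := by
    have : Nat.Coprime (p ^ k) m := Nat.Coprime.pow_left k hcop
    have h1 : IsCoprime (((p ^ k : ℕ)) : ℤ) ((m : ℤ)) := Nat.isCoprime_iff_coprime.mpr this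
    rwa [Nat.cast_pow] at h1
  obtain ⟨α, β, hab⟩ := hcop2
  have hNa : ((N : ℤ)) • a = 0 := by rw [natCast_zsmul, addOrderOf_nsmul_eq_zero]
  refine ⟨(β * (m : ℤ)) • a, (α * (p : ℤ) ^ k) • a, ?_, ?_, ?_, ?_⟩
  · refine mem_pComponent_z.mpr ⟨k, ?_⟩
    have he : (p:ℤ)^k * (β * (m:ℤ)) = β * ((N : ℕ) : ℤ) := by rw [← hNm]; push_cast; ring
    rw [smul_smul, he, mul_smul, hNa, smul_zero]
  · refine ⟨m, Nat.Coprime.symm hcop, ?_⟩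
    have he : (m:ℤ) * (α * (p:ℤ)^k) = α * ((N : ℕ) : ℤ) := by rw [← hNm]; push_cast; ring
    rw [← natCast_zsmul, smul_smul, he, mul_smul, hNa, smul_zero]
  · rw [← add_smul]
    have : β * (m : ℤ) + α * (p : ℤ) ^ k = 1 := by rw [← hab]; ring
    rw [this, one_smul]
  · intro n hn
    constructor
    · rw [smul_smul, mul_comm, mul_smul, hn, smul_zero]
    · rw [smul_smul, mul_comm, mul_smul, hn, smul_zero]

/-- Splitting w.r.t. an involution, preserving annihilators. -/
theorem posneg_split (hA : AddMonoid.IsTorsion A) (h2 : pComponent A 2 = ⊥)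
    (ξ : AddAut A) (hinv : ξ + ξ = 0) (a : A) :
    ∃ u v : A, u ∈ posPart ξ ∧ v ∈ negPart ξ ∧ a = u + v ∧
      ∀ n : ℤ, n • a = 0 → n • u = 0 ∧ n • v = 0 := by
  have hxx : ∀ x : A, ξ (ξ x) = x := by
    intro x
    have := DFunLike.congr_fun hinv x
    simpa using this
  obtain ⟨u, hu⟩ := exists_half hA h2 (a + ξ a)
  have hξu : ξ u = u := by
    have h1 : ξ u + ξ u = a + ξ a := by
      rw [← map_add, hu, map_add, hxx, add_comm]
    exact half_unique h2 (h1.trans hu.symm)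
  refine ⟨u, a - u, hξu, ?_, by abel, ?_⟩
  · show ξ (a - u) = -(a - u)
    rw [map_sub, hξu]
    have h3 : ξ a + a = u + u := by rw [hu]; abel
    have : ξ a = u + u - a := eq_sub_of_add_eq h3
    rw [this]; abel
  · intro n hn
    have h1 : (n • u) + (n • u) = 0 := by
      rw [← smul_add, hu, smul_add, hn, zero_add, ← map_zsmul, hn, map_zero]
    have hu0 : n • u = 0 := by
      have : (n • u) ∈ pComponent A 2 := ⟨1, by rw [pow_one, two_nsmul]; exact h1⟩
      rw [h2] at this; exact AddSubgroup.mem_bot.mp this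
    exact ⟨hu0, by rw [smul_sub, hn, hu0, sub_zero]⟩

theorem pos_meet_neg (h2 : pComponent A 2 = ⊥) (ξ : AddAut A) :
    posPart ξ ⊓ negPart ξ = ⊥ := by
  rw [eq_bot_iff]
  rintro x ⟨hx1, hx2⟩
  have : x + x = 0 := by
    have h1 : ξ x = x := hx1
    have h2' : ξ x = -x := hx2
    have : x = -x := h1.symm.trans h2'
    rw [eq_neg_iff_add_eq_zero] at this
    exact this
  exact AddSubgroup.mem_bot.mpr (two_tf h2 this)


open AddSubgroup in
/-- In a cyclic `p`-group, the bottom socle element is a multiple of every nonzero element. -/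
theorem cyclic_socle {p : ℕ} (hp : p.Prime) :
    ∀ (m : ℕ) (b : A), (p : ℤ) ^ (m + 1) • b = 0 → (p : ℤ) ^ m • b ≠ 0 →
      ∀ k : ℤ, k • b ≠ 0 → (p : ℤ) ^ m • b ∈ zmultiples (k • b) := by
  intro m
  induction m with
  | zero =>
    intro b hb1 hb0 k hk
    by_cases hd : (p : ℤ) ∣ k
    · obtain ⟨k', rfl⟩ := hd
      exfalso
      apply hk
      rw [mul_comm, mul_smul]
      have : (p : ℤ) • b = 0 := by simpa using hb1
      rw [this, smul_zero]
    · obtain ⟨α, β, hab⟩ := coprime_pow_of_not_dvd hp hd 1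
      have hp1 : (p:ℤ)^1 • b = 0 := by rw [pow_one]; simpa using hb1
      have hb : b = α • (k • b) := by
        calc b = (α * k + β * (p:ℤ)^1) • b := by rw [hab, one_smul]
          _ = α • (k • b) + β • ((p:ℤ)^1 • b) := by rw [add_smul, mul_smul, mul_smul]
          _ = α • (k • b) := by rw [hp1, smul_zero, add_zero]
      have hmem : α • (k • b) ∈ zmultiples (k • b) := zsmul_mem (mem_zmultiples _) α
      rw [← hb] at hmem
      rw [pow_zero, one_smul]
      exact hmem
  | succ m ih =>
    intro b hb1 hb0 k hk
    by_cases hd : (p : ℤ) ∣ k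
    · obtain ⟨k', rfl⟩ := hd
      have h1 : (p:ℤ) ^ (m+1) • ((p:ℤ) • b) = 0 := by
        rw [smul_smul, ← pow_succ, hb1]
      have h2 : (p:ℤ) ^ m • ((p:ℤ) • b) ≠ 0 := by
        rw [smul_smul, ← pow_succ]; exact hb0
      have h3 : k' • ((p:ℤ) • b) ≠ 0 := by
        rw [smul_smul, mul_comm]; exact hk
      have e1 : (p:ℤ)^(m+1) • b = (p:ℤ)^m • ((p:ℤ) • b) := by rw [smul_smul, ← pow_succ]
      have e2 : ((p:ℤ)*k') • b = k' • ((p:ℤ) • b) := by rw [smul_smul, mul_comm]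
      rw [e1, e2]
      exact ih ((p:ℤ) • b) h1 h2 k' h3
    · obtain ⟨α, β, hab⟩ := coprime_pow_of_not_dvd hp hd (m + 2)
      have h1 : (p:ℤ)^(m+2) • b = 0 := hb1
      have hb : b = α • (k • b) := by
        calc b = (α * k + β * (p:ℤ)^(m+2)) • b := by rw [hab, one_smul]
          _ = α • (k • b) + β • ((p:ℤ)^(m+2) • b) := by rw [add_smul, mul_smul, mul_smul]
          _ = α • (k • b) := by rw [h1, smul_zero, add_zero]
      have hmem : (p:ℤ)^(m+1) • (α • (k • b)) ∈ zmultiples (k • b) :=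
        zsmul_mem (zsmul_mem (mem_zmultiples _) α) _
      rw [← hb] at hmem
      exact hmem

open AddSubgroup in
theorem indecomp_of_socle {E : AddSubgroup A} {g : A} (hg : g ∈ E) (hg0 : g ≠ 0)
    (hsoc : ∀ z ∈ E, z ≠ 0 → g ∈ zmultiples z) : Indecomp E := by
  constructor
  · intro h
    rw [h] at hg
    exact hg0 (AddSubgroup.mem_bot.mp hg)
  · rintro ⟨C, D, hC, hD, hmeet, hjoin⟩
    obtain ⟨c, hc, hc0⟩ : ∃ c, c ∈ C ∧ c ≠ 0 := by
      by_contra h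
      push_neg at h
      exact hC (eq_bot_iff.mpr fun x hx => AddSubgroup.mem_bot.mpr (h x hx))
    obtain ⟨d, hd, hd0⟩ : ∃ d, d ∈ D ∧ d ≠ 0 := by
      by_contra h
      push_neg at h
      exact hD (eq_bot_iff.mpr fun x hx => AddSubgroup.mem_bot.mpr (h x hx))
    have hcE : c ∈ E := hjoin ▸ (le_sup_left (a := C) (b := D)) hc
    have hdE : d ∈ E := hjoin ▸ (le_sup_right (a := C) (b := D)) hd
    have hgC : g ∈ C := by
      obtain ⟨k, hk⟩ := mem_zmultiples_iff.mp (hsoc c hcE hc0)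
      rw [← hk]; exact zsmul_mem hc k
    have hgD : g ∈ D := by
      obtain ⟨k, hk⟩ := mem_zmultiples_iff.mp (hsoc d hdE hd0)
      rw [← hk]; exact zsmul_mem hd k
    have : g ∈ C ⊓ D := ⟨hgC, hgD⟩
    rw [hmeet] at this
    exact hg0 (AddSubgroup.mem_bot.mp this)

open AddSubgroup in
/-- Zorn complement engine. -/
theorem complement_engine {p : ℕ} (hp : p.Prime) (P E seed : AddSubgroup A)
    (hEP : E ≤ P) (hseedP : seed ≤ P) {g : A} (hgE : g ∈ E) (hg0 : g ≠ 0)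
    (hsoc : ∀ z ∈ E, z ≠ 0 → g ∈ zmultiples z) (hgseed : g ∉ seed)
    (htor : ∀ x ∈ P, ∃ y ∈ P, (∃ k : ℕ, (p : ℤ) ^ k • y = 0) ∧ x - y ∈ seed)
    (hcrux : ∀ C : AddSubgroup A, seed ≤ C → C ≤ P → g ∉ C →
      ∀ x ∈ P, (p : ℤ) • x ∈ E ⊔ C → ∃ e ∈ E, (p : ℤ) • x - (p : ℤ) • e ∈ C) :
    ∃ C : AddSubgroup A, C ≤ P ∧ E ⊓ C = ⊥ ∧ E ⊔ C = P := by
  classical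
  set S : Set (AddSubgroup A) := {C | seed ≤ C ∧ C ≤ P ∧ g ∉ C} with hS
  have hseedS : seed ∈ S := ⟨le_rfl, hseedP, hgseed⟩
  have hchainub : ∀ c ⊆ S, IsChain (· ≤ ·) c → ∀ y ∈ c, ∃ ub ∈ S, ∀ z ∈ c, z ≤ ub := by
    intro c hcS hchain y hy
    refine ⟨sSup c, ?_, fun z hz => le_sSup hz⟩
    have hne : c.Nonempty := ⟨y, hy⟩
    have hdir : DirectedOn (· ≤ ·) c := IsChain.directedOn hchain
    refine ⟨le_trans (hcS hy).1 (le_sSup hy), ?_, ?_⟩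
    · exact sSup_le fun z hz => (hcS hz).2.1
    · intro hgM
      obtain ⟨s, hs, hgs⟩ := (AddSubgroup.mem_sSup_of_directedOn hne hdir).mp hgM
      exact (hcS hs).2.2 hgs
  obtain ⟨M, hseedM, hMmax⟩ := zorn_le_nonempty₀ S hchainub seed hseedS
  obtain ⟨hseedM', hMP, hgM⟩ := hMmax.prop
  -- the subgroup M works
  refine ⟨M, hMP, ?_, ?_⟩
  · rw [eq_bot_iff]
    intro x hx
    by_contra hx0
    have hx0' : x ≠ 0 := fun h => hx0 (h ▸ AddSubgroup.mem_bot.mpr rfl)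
    have : g ∈ zmultiples x := hsoc x hx.1 hx0'
    obtain ⟨k, hk⟩ := mem_zmultiples_iff.mp this
    have : k • x ∈ M := M.zsmul_mem hx.2 k
    rw [hk] at this
    exact hgM this
  · -- join
    apply le_antisymm (sup_le hEP hMP)
    intro x hxP
    obtain ⟨y, hyP, ⟨k, hky⟩, hxy⟩ := htor x hxP
    have key : ∀ (k : ℕ) (y : A), y ∈ P → (p : ℤ) ^ k • y = 0 → y ∈ E ⊔ M := by
      intro k
      induction k with
      | zero =>
        intro y _ hy
        rw [pow_zero, one_smul] at hy
        rw [hy]; exact zero_mem _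
      | succ k ih =>
        intro y hyP hy
        have hpy : (p : ℤ) • y ∈ E ⊔ M := by
          apply ih ((p:ℤ) • y) (P.zsmul_mem hyP _)
          rw [smul_smul, ← pow_succ, hy]
        obtain ⟨e, heE, hem⟩ := hcrux M hseedM' hMP hgM y hyP hpy
        set z := y - e with hz
        have hpz : (p : ℤ) • z ∈ M := by rw [hz, smul_sub]; exact hem
        by_cases hzM : z ∈ M
        · have : y = e + z := by rw [hz]; abel
          rw [this]
          exact AddSubgroup.add_mem_sup heE hzM
        · -- maximality argument
          have hzP : z ∈ P := by
            rw [hz]; exact sub_mem hyP (hEP heE)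
          set M' := M ⊔ zmultiples z with hM'
          have hgM' : g ∈ M' := by
            by_contra hgM'
            have hM'S : M' ∈ S := by
              refine ⟨le_trans hseedM' le_sup_left, ?_, hgM'⟩
              apply sup_le hMP
              intro w hw
              obtain ⟨j, hj⟩ := mem_zmultiples_iff.mp hw
              rw [← hj]; exact P.zsmul_mem hzP j
            have := hMmax.le_of_ge hM'S le_sup_left
            exact hzM (this ((le_sup_right : zmultiples z ≤ M ⊔ zmultiples z) (mem_zmultiples z)))
          obtain ⟨c₂, hc₂, w, hw, hcw⟩ := AddSubgroup.mem_sup.mp hgM'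
          obtain ⟨j, hj⟩ := mem_zmultiples_iff.mp hw
          by_cases hdj : (p : ℤ) ∣ j
          · exfalso
            obtain ⟨j', rfl⟩ := hdj
            apply hgM
            have : w ∈ M := by
              rw [← hj, mul_comm, mul_smul]
              exact M.zsmul_mem hpz j'
            rw [← hcw]; exact add_mem hc₂ this
          · have hcop : IsCoprime j ((p:ℤ)^1) := coprime_pow_of_not_dvd hp hdj 1
            rw [pow_one] at hcop
            obtain ⟨α, β, hab⟩ := hcop
            have hzEM : z ∈ E ⊔ M := by
              have h1 : z = α • (j • z) + β • ((p:ℤ) • z) := by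
                rw [smul_smul, smul_smul, ← add_smul, hab, one_smul]
              rw [h1]
              apply add_mem
              · have hjz : j • z = g - c₂ := by rw [hj]; exact eq_sub_of_add_eq' hcw
                rw [hjz]
                exact (E ⊔ M).zsmul_mem
                  (sub_mem ((le_sup_left : E ≤ E ⊔ M) hgE) ((le_sup_right : M ≤ E ⊔ M) hc₂)) α
              · exact (E ⊔ M).zsmul_mem ((le_sup_right : M ≤ E ⊔ M) hpz) β
            have : y = e + z := by rw [hz]; abel
            rw [this]
            exact add_mem ((le_sup_left : E ≤ E ⊔ M) heE) hzEM
    have hyEM : y ∈ E ⊔ M := key k y hyP hky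
    have : x = y + (x - y) := by abel
    rw [this]
    exact add_mem hyEM ((le_sup_right : M ≤ E ⊔ M) (hseedM' hxy))


open AddSubgroup

/-- Image of a subgroup under multiplication by `(p:ℤ)^j`. -/
def pImage (p : ℕ) (j : ℕ) (P : AddSubgroup A) : AddSubgroup A :=
  AddSubgroup.map (zsmulAddGroupHom ((p : ℤ) ^ j)) P

theorem mem_pImage {p j : ℕ} {P : AddSubgroup A} {x : A} :
    x ∈ pImage p j P ↔ ∃ y ∈ P, (p : ℤ) ^ j • y = x := Iff.rfl

theorem pImage_le {p j : ℕ} {P : AddSubgroup A} : pImage p j P ≤ P := by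
  rintro x ⟨y, hy, rfl⟩
  exact P.zsmul_mem hy _

theorem socle_elt {p : ℕ} {P : AddSubgroup A} (hPp : P ≤ pComponent A p)
    {a : A} (ha : a ∈ P) (ha0 : a ≠ 0) :
    ∃ a', a' ∈ P ∧ a' ≠ 0 ∧ (p : ℤ) • a' = 0 := by
  classical
  have htor : ∃ n : ℕ, (p : ℤ) ^ n • a = 0 := mem_pComponent_z.mp (hPp ha)
  set n := Nat.find htor with hn
  have hspec : (p : ℤ) ^ n • a = 0 := Nat.find_spec htor
  have hn0 : n ≠ 0 := by
    intro h
    rw [h, pow_zero, one_smul] at hspec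
    exact ha0 hspec
  obtain ⟨m, hm⟩ : ∃ m, n = m + 1 := ⟨n - 1, by omega⟩
  refine ⟨(p : ℤ) ^ m • a, P.zsmul_mem ha _, ?_, ?_⟩
  · intro h
    exact Nat.find_min htor (by omega : m < n) h
  · rw [smul_smul, ← pow_succ', ← hm, hspec]

/-- The crux step for a cyclic candidate summand. -/
theorem cyclic_crux {p : ℕ} (hp : p.Prime) {P seed : AddSubgroup A} {b g : A} {n : ℕ}
    (hbord : (p : ℤ) ^ (n + 1) • b = 0) (hgb : (p : ℤ) ^ n • b = g)
    (hcont : ∀ x ∈ P, (p : ℤ) ^ (n + 1) • x ∈ seed) :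
    ∀ C : AddSubgroup A, seed ≤ C → C ≤ P → g ∉ C →
      ∀ x ∈ P, (p : ℤ) • x ∈ zmultiples b ⊔ C →
        ∃ e ∈ zmultiples b, (p : ℤ) • x - (p : ℤ) • e ∈ C := by
  intro C hseedC hCP hgC x hxP hpx
  obtain ⟨w, hw, c, hc, hwc⟩ := AddSubgroup.mem_sup.mp hpx
  obtain ⟨t, ht⟩ := mem_zmultiples_iff.mp hw
  by_cases hd : (p : ℤ) ∣ t
  · obtain ⟨t', rfl⟩ := hd
    refine ⟨t' • b, zsmul_mem (mem_zmultiples b) t', ?_⟩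
    have : (p : ℤ) • (t' • b) = w := by rw [smul_smul, ← ht]
    rw [this]
    have : (p : ℤ) • x - w = c := by rw [← hwc]; abel
    rw [this]; exact hc
  · exfalso
    obtain ⟨α, β, hab⟩ := coprime_pow_of_not_dvd hp hd (n + 1)
    have hb : b = α • w := by
      calc b = (α * t + β * (p : ℤ) ^ (n + 1)) • b := by rw [hab, one_smul]
        _ = α • (t • b) + β • ((p : ℤ) ^ (n + 1) • b) := by
            rw [add_smul, mul_smul, mul_smul]
        _ = α • (t • b) := by rw [hbord, smul_zero, add_zero]
        _ = α • w := by rw [ht]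
    have hwx : w = (p : ℤ) • x - c := by rw [← hwc]; abel
    have : g = α • ((p : ℤ) ^ (n + 1) • x - (p : ℤ) ^ n • c) := by
      rw [← hgb, hb, hwx, smul_comm ((p:ℤ)^n) α, smul_sub, smul_smul, ← pow_succ]
    apply hgC
    rw [this]
    exact C.zsmul_mem (sub_mem (hseedC (hcont x hxP)) (C.zsmul_mem hc _)) α

section Chain

variable {p : ℕ} {x : ℕ → A}

theorem chain_pow_smul (hstep : ∀ i, (p : ℤ) • x (i + 1) = x i) :
    ∀ i, (p : ℤ) ^ i • x i = x 0 := by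
  intro i
  induction i with
  | zero => rw [pow_zero, one_smul]
  | succ i ih =>
    rw [pow_succ, mul_smul, hstep, ih]

theorem chain_ann (hx0p : (p : ℤ) • x 0 = 0) (hstep : ∀ i, (p : ℤ) • x (i + 1) = x i) :
    ∀ i, (p : ℤ) ^ (i + 1) • x i = 0 := by
  intro i
  rw [pow_succ', mul_smul, chain_pow_smul hstep i, hx0p]

theorem chain_mono (hstep : ∀ i, (p : ℤ) • x (i + 1) = x i) :
    Monotone fun i => zmultiples (x i) := by
  apply monotone_nat_of_le_succ
  intro i z hz
  obtain ⟨k, rfl⟩ := mem_zmultiples_iff.mp hz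
  exact mem_zmultiples_iff.mpr ⟨k * p, by rw [mul_smul, hstep]⟩

theorem chain_mem (hstep : ∀ i, (p : ℤ) • x (i + 1) = x i) {z : A} :
    z ∈ (⨆ i, zmultiples (x i)) ↔ ∃ i, z ∈ zmultiples (x i) :=
  AddSubgroup.mem_iSup_of_directed (chain_mono hstep).directed_le

theorem chain_ann_dvd (hp : p.Prime) (hx0 : x 0 ≠ 0) (hx0p : (p : ℤ) • x 0 = 0)
    (hstep : ∀ i, (p : ℤ) • x (i + 1) = x i) :
    ∀ i (m : ℤ), m • x i = 0 → (p : ℤ) ^ (i + 1) ∣ m := by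
  intro i
  induction i with
  | zero =>
    intro m hm
    rw [pow_one]
    exact prime_dvd_of_smul_eq_zero hp (by rw [pow_one]; exact hx0p) hx0 hm
  | succ i ih =>
    intro m hm
    have h1 : m • x i = 0 := by
      rw [← hstep i, smul_comm, hm, smul_zero]
    obtain ⟨m', rfl⟩ := ih m h1
    have h2 : m' • x 0 = 0 := by
      have := chain_pow_smul hstep (i + 1)
      calc m' • x 0 = m' • ((p:ℤ)^(i+1) • x (i+1)) := by rw [this]
        _ = ((p:ℤ)^(i+1) * m') • x (i+1) := by rw [smul_smul, mul_comm]
        _ = 0 := hm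
    have h3 : (p : ℤ) ∣ m' :=
      prime_dvd_of_smul_eq_zero hp (by rw [pow_one]; exact hx0p) hx0 h2
    obtain ⟨m'', rfl⟩ := h3
    exact ⟨m'', by ring⟩

end Chain

/-- Existence of an indecomposable direct summand inside any nonzero subgroup of a
`p`-component. -/
theorem summand {p : ℕ} (hp : p.Prime) (P : AddSubgroup A) (hPp : P ≤ pComponent A p)
    (hP : P ≠ ⊥) :
    ∃ E C : AddSubgroup A, E ≤ P ∧ C ≤ P ∧ Indecomp E ∧ E ⊓ C = ⊥ ∧ E ⊔ C = P := by
  classical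
  obtain ⟨a₀, ha₀P, ha₀0⟩ : ∃ a₀, a₀ ∈ P ∧ a₀ ≠ 0 := by
    by_contra h
    push_neg at h
    exact hP (eq_bot_iff.mpr fun z hz => AddSubgroup.mem_bot.mpr (h z hz))
  by_cases hfin : ∃ a, a ∈ P ∧ a ≠ 0 ∧ (p : ℤ) • a = 0 ∧ ∃ j, a ∉ pImage p j P
  · -- cyclic case
    obtain ⟨a, haP, ha0, hap, hj⟩ := hfin
    have h0 : a ∈ pImage p 0 P :=
      ⟨a, haP, by show (p:ℤ)^0 • a = a; rw [pow_zero, one_smul]⟩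
    set j₁ := Nat.find hj with hj₁
    have hspec : a ∉ pImage p j₁ P := Nat.find_spec hj
    have hj₁0 : j₁ ≠ 0 := by
      intro h
      rw [h] at hspec
      exact hspec h0
    obtain ⟨n, hn⟩ : ∃ n, j₁ = n + 1 := ⟨j₁ - 1, by omega⟩
    have hmem : a ∈ pImage p n P := by
      by_contra h
      exact absurd (Nat.find_min hj (by omega : n < j₁)) (fun h' => h' h)
    obtain ⟨b, hbPmap, hbamap⟩ := hmem
    have hbP : b ∈ P := hbPmap
    have hba : (p : ℤ) ^ n • b = a := hbamap
    have hbord : (p : ℤ) ^ (n + 1) • b = 0 := by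
      rw [pow_succ, mul_comm, mul_smul, hba, hap]
    have hnot : a ∉ pImage p (n + 1) P := hn ▸ hspec
    have ha' : (p : ℤ) ^ n • b ≠ 0 := by rw [hba]; exact ha0
    have hsoc : ∀ z ∈ zmultiples b, z ≠ 0 → a ∈ zmultiples z := by
      intro z hz hz0
      obtain ⟨k, rfl⟩ := mem_zmultiples_iff.mp hz
      have := cyclic_socle hp n b hbord ha' k hz0
      rwa [hba] at this
    have hEP : zmultiples b ≤ P := by
      intro z hz
      obtain ⟨k, rfl⟩ := mem_zmultiples_iff.mp hz
      exact P.zsmul_mem hbP k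
    obtain ⟨C, hCP, hmeet, hjoin⟩ :=
      complement_engine hp P (zmultiples b) (pImage p (n + 1) P) hEP pImage_le
        (mem_zmultiples_iff.mpr ⟨(p : ℤ) ^ n, hba⟩) ha0 hsoc hnot
        (fun x hx => ⟨x, hx, mem_pComponent_z.mp (hPp hx), by rw [sub_self]; exact zero_mem _⟩)
        (cyclic_crux hp hbord hba (fun x hx => ⟨x, hx, rfl⟩))
    exact ⟨zmultiples b, C, hEP, hCP,
      indecomp_of_socle (mem_zmultiples_iff.mpr ⟨(p : ℤ) ^ n, hba⟩) ha0 hsoc, hmeet, hjoin⟩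
  · -- divisible case
    push_neg at hfin
    have hdiv : ∀ x ∈ P, ∃ y ∈ P, (p : ℤ) • y = x := by
      have aux : ∀ (k : ℕ) (x : A), x ∈ P → (p : ℤ) ^ k • x = 0 → ∃ y ∈ P, (p : ℤ) • y = x := by
        intro k
        induction k with
        | zero =>
          intro x hx h0
          rw [pow_zero, one_smul] at h0
          exact ⟨0, zero_mem _, by rw [smul_zero, h0]⟩
        | succ k ih =>
          intro x hx h0
          by_cases hz : (p : ℤ) ^ k • x = 0
          · exact ih x hx hz
          · have hzP : (p : ℤ) ^ k • x ∈ P := P.zsmul_mem hx _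
            have hzp : (p : ℤ) • ((p : ℤ) ^ k • x) = 0 := by
              rw [smul_smul, ← pow_succ', h0]
            have := hfin ((p:ℤ)^k • x) hzP hz hzp
            obtain ⟨w, hwPmap, hwmap⟩ := this (k + 1)
            have hwP : w ∈ P := hwPmap
            have hw : (p : ℤ) ^ (k + 1) • w = (p : ℤ) ^ k • x := hwmap
            have hsub : (p : ℤ) ^ k • (x - (p : ℤ) • w) = 0 := by
              rw [smul_sub]
              have he : (p:ℤ)^k • ((p:ℤ) • w) = (p:ℤ)^(k+1) • w := by
                rw [smul_smul, ← pow_succ]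
              rw [he, hw, sub_self]
            obtain ⟨y', hy'P, hy'⟩ := ih (x - (p : ℤ) • w) (sub_mem hx (P.zsmul_mem hwP _)) hsub
            refine ⟨w + y', add_mem hwP hy'P, ?_⟩
            rw [smul_add, hy']
            abel
      intro x hx
      obtain ⟨k, hk⟩ := mem_pComponent_z.mp (hPp hx)
      exact aux k x hx hk
    obtain ⟨a, haP, ha0, hap⟩ := socle_elt hPp ha₀P ha₀0
    obtain ⟨f, hfP, hf0, hfstep⟩ :
        ∃ f : ℕ → A, (∀ i, f i ∈ P) ∧ f 0 = a ∧ ∀ i, (p : ℤ) • f (i + 1) = f i := by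
      choose F hFP hFp using hdiv
      let seq : ℕ → {z : A // z ∈ P} := fun n =>
        Nat.rec ⟨a, haP⟩ (fun _ prev => ⟨F prev.1 prev.2, hFP _ _⟩) n
      exact ⟨fun n => (seq n).1, fun n => (seq n).2, rfl, fun i => hFp _ _⟩
    have hf00 : f 0 ≠ 0 := hf0 ▸ ha0
    have hf0p : (p : ℤ) • f 0 = 0 := by rw [hf0]; exact hap
    set E := ⨆ i, zmultiples (f i) with hE
    have hEP : E ≤ P := by
      apply iSup_le
      intro i z hz
      obtain ⟨k, rfl⟩ := mem_zmultiples_iff.mp hz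
      exact P.zsmul_mem (hfP i) k
    have hgE : f 0 ∈ E := le_iSup (fun i => zmultiples (f i)) 0 (mem_zmultiples (f 0))
    have hsoc : ∀ z ∈ E, z ≠ 0 → f 0 ∈ zmultiples z := by
      intro z hz hz0
      obtain ⟨i, hi⟩ := (chain_mem hfstep).mp hz
      obtain ⟨k, rfl⟩ := mem_zmultiples_iff.mp hi
      have := cyclic_socle hp i (f i) (chain_ann hf0p hfstep i) ?_ k hz0
      · rwa [chain_pow_smul hfstep i] at this
      · rw [chain_pow_smul hfstep i]; exact hf00
    have hcrux : ∀ C : AddSubgroup A, ⊥ ≤ C → C ≤ P → f 0 ∉ C →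
        ∀ x ∈ P, (p : ℤ) • x ∈ E ⊔ C → ∃ e ∈ E, (p : ℤ) • x - (p : ℤ) • e ∈ C := by
      intro C _ _ _ x hxP hpx
      obtain ⟨w, hw, c, hc, hwc⟩ := AddSubgroup.mem_sup.mp hpx
      obtain ⟨i, hi⟩ := (chain_mem hfstep).mp hw
      obtain ⟨k, rfl⟩ := mem_zmultiples_iff.mp hi
      refine ⟨k • f (i + 1),
        (le_iSup (fun i => zmultiples (f i)) (i+1)) (zsmul_mem (mem_zmultiples _) k), ?_⟩
      have h1 : (p : ℤ) • (k • f (i + 1)) = k • f i := by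
        rw [smul_comm, hfstep]
      rw [h1]
      have h2 : (p : ℤ) • x - k • f i = c := by rw [← hwc]; abel
      rw [h2]; exact hc
    obtain ⟨C, hCP, hmeet, hjoin⟩ :=
      complement_engine hp P E ⊥ hEP bot_le hgE hf00 hsoc
        (by simpa using hf00)
        (fun x hx => ⟨x, hx, mem_pComponent_z.mp (hPp hx), by rw [sub_self]; exact zero_mem _⟩)
        hcrux
    exact ⟨E, C, hEP, hCP, indecomp_of_socle hgE hf00 hsoc, hmeet, hjoin⟩


/-- The flip automorphism attached to a direct decomposition: `-1` on `B`, `+1` on `Bp`. -/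
theorem flip_exists (h2 : pComponent A 2 = ⊥) (B Bp : AddSubgroup A)
    (hmeet : B ⊓ Bp = ⊥) (hjoin : B ⊔ Bp = ⊤) :
    ∃ ε : AddAut A, ε + ε = 0 ∧ posPart ε = Bp ∧ negPart ε = B ∧
      (∀ b ∈ B, ε b = -b) ∧ (∀ c ∈ Bp, ε c = c) := by
  classical
  have hdecomp : ∀ a : A, ∃ y ∈ B, ∃ z ∈ Bp, y + z = a := fun a =>
    AddSubgroup.mem_sup.mp (hjoin ▸ AddSubgroup.mem_top a)
  choose π hπ z hzBp hsum using hdecomp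
  have hzeq : ∀ a, a - π a ∈ Bp := by
    intro a
    have : a - π a = z a := (eq_sub_of_add_eq' (hsum a)).symm
    rw [this]; exact hzBp a
  have keyUniq : ∀ a y, y ∈ B → a - y ∈ Bp → π a = y := by
    intro a y hy hay
    have h1 : π a - y ∈ B := sub_mem (hπ a) hy
    have h2 : π a - y ∈ Bp := by
      have : π a - y = (a - y) - (a - π a) := by abel
      rw [this]; exact sub_mem hay (hzeq a)
    have : π a - y ∈ B ⊓ Bp := ⟨h1, h2⟩
    rw [hmeet] at this
    exact sub_eq_zero.mp (AddSubgroup.mem_bot.mp this)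
  have hπadd : ∀ a b, π (a + b) = π a + π b := by
    intro a b
    apply keyUniq
    · exact add_mem (hπ a) (hπ b)
    · have : a + b - (π a + π b) = (a - π a) + (b - π b) := by abel
      rw [this]; exact add_mem (hzeq a) (hzeq b)
  set F : A → A := fun a => a - (π a + π a) with hF
  have hπF : ∀ a, π (F a) = -π a := by
    intro a
    apply keyUniq
    · exact neg_mem (hπ a)
    · have h3 : F a - (-π a) = a - π a := by
        show (a - (π a + π a)) - (-π a) = a - π a
        abel
      rw [h3]; exact hzeq a
  have hFF : ∀ a, F (F a) = a := by
    intro a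
    have h5 : F (F a) = F a - (π (F a) + π (F a)) := rfl
    have h4 : F a = a - (π a + π a) := rfl
    rw [h5, hπF a, h4]; abel
  have hFadd : ∀ a b, F (a + b) = F a + F b := by
    intro a b
    show a + b - (π (a+b) + π (a+b)) = (a - (π a + π a)) + (b - (π b + π b))
    rw [hπadd]; abel
  refine ⟨{ toFun := F, invFun := F, left_inv := hFF, right_inv := hFF,
            map_add' := hFadd }, ?_, ?_, ?_, ?_, ?_⟩
  · ext a
    show F (F a) = a
    exact hFF a
  · ext a
    show F a = a ↔ a ∈ Bp
    constructor
    · intro h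
      have h1 : π a + π a = 0 := sub_eq_self.mp h
      have h2 : π a = 0 := two_tf h2 h1
      have := hzeq a
      rwa [h2, sub_zero] at this
    · intro h
      have : π a = 0 := keyUniq a 0 (zero_mem B) (by rwa [sub_zero])
      show a - (π a + π a) = a
      rw [this, add_zero, sub_zero]
  · ext a
    show F a = -a ↔ a ∈ B
    constructor
    · intro h
      have h1 : (a - π a) + (a - π a) = 0 := by
        have e : (a - π a) + (a - π a) = (a - (π a + π a)) + a := by abel
        rw [e, show a - (π a + π a) = -a from h, neg_add_cancel]
      have h2 : a - π a = 0 := two_tf h2 h1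
      have : a = π a := by
        have := sub_eq_zero.mp h2
        exact this
      rw [this]; exact hπ a
    · intro h
      have : π a = a := keyUniq a a h (by rw [sub_self]; exact zero_mem Bp)
      show a - (π a + π a) = -a
      rw [this]; abel
  · intro b hb
    have : π b = b := keyUniq b b hb (by rw [sub_self]; exact zero_mem Bp)
    show b - (π b + π b) = -b
    rw [this]; abel
  · intro c hc
    have : π c = 0 := keyUniq c 0 (zero_mem B) (by rwa [sub_zero])
    show c - (π c + π c) = c
    rw [this, add_zero, sub_zero]

theorem commute_of_invariant (hA : AddMonoid.IsTorsion A) (h2 : pComponent A 2 = ⊥)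
    (ξ ε : AddAut A) (hεinv : ε + ε = 0)
    (hposinv : ∀ a ∈ posPart ε, ξ a ∈ posPart ε)
    (hneginv : ∀ a ∈ negPart ε, ξ a ∈ negPart ε) :
    ε + ξ = ξ + ε := by
  ext a
  show ε (ξ a) = ξ (ε a)
  obtain ⟨u, v, hu, hv, rfl, -⟩ := posneg_split hA h2 ε hεinv a
  have hεu : ε u = u := hu
  have hεv : ε v = -v := hv
  have hξu : ε (ξ u) = ξ u := hposinv u hu
  have hξv : ε (ξ v) = -ξ v := hneginv v hv
  calc ε (ξ (u + v)) = ε (ξ u) + ε (ξ v) := by rw [map_add, map_add]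
    _ = ξ u + -(ξ v) := by rw [hξu, hξv]
    _ = ξ u + ξ (-v) := by rw [map_neg]
    _ = ξ (u + -v) := by rw [← map_add]
    _ = ξ (ε u + ε v) := by rw [hεu, hεv]
    _ = ξ (ε (u + v)) := by rw [← map_add]

theorem invariant_of_commute {ξ ε : AddAut A} (h : ε + ξ = ξ + ε) :
    (∀ a ∈ posPart ε, ξ a ∈ posPart ε) ∧ (∀ a ∈ negPart ε, ξ a ∈ negPart ε) := by
  have hc : ∀ a : A, ε (ξ a) = ξ (ε a) := fun a => DFunLike.congr_fun h a
  constructor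
  · intro a ha
    show ε (ξ a) = ξ a
    rw [hc a, show ε a = a from ha]
  · intro a ha
    show ε (ξ a) = -ξ a
    rw [hc a, show ε a = -a from ha, map_neg]


theorem restrict_apply (ξ : AddAut A) (p : ℕ) (x : ↥(pComponent A p)) :
    ((restrictComp ξ p) x : A) = ξ (x : A) := rfl

theorem central_of_id {ξ : AddAut A} {p : ℕ} (h : ∀ a ∈ pComponent A p, ξ a = a) :
    restrictComp ξ p ∈ AddSubgroup.center (AddAut ↥(pComponent A p)) := by
  have : restrictComp ξ p = 0 := by
    apply AddEquiv.ext
    intro x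
    exact Subtype.ext (h x.1 x.2)
  rw [this]
  exact AddSubgroup.zero_mem _

theorem central_of_neg {ξ : AddAut A} {p : ℕ} (h : ∀ a ∈ pComponent A p, ξ a = -a) :
    restrictComp ξ p ∈ AddSubgroup.center (AddAut ↥(pComponent A p)) := by
  apply AddSubgroup.mem_center_iff.mpr
  intro g
  apply AddEquiv.ext
  intro x
  show g ((restrictComp ξ p) x) = (restrictComp ξ p) (g x)
  have h1 : (restrictComp ξ p) x = -x := Subtype.ext (h x.1 x.2)
  have h2 : (restrictComp ξ p) (g x) = -(g x) := Subtype.ext (h (g x).1 (g x).2)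
  rw [h1, h2, map_neg]

theorem parts_nonbot (hA : AddMonoid.IsTorsion A) (h2 : pComponent A 2 = ⊥)
    {ξ : AddAut A} (hinv : ξ + ξ = 0) {p : ℕ}
    (h : restrictComp ξ p ∉ AddSubgroup.center (AddAut ↥(pComponent A p))) :
    posPart ξ ⊓ pComponent A p ≠ ⊥ ∧ negPart ξ ⊓ pComponent A p ≠ ⊥ := by
  constructor
  · intro hbot
    apply h
    apply central_of_neg
    intro a ha
    obtain ⟨u, v, hu, hv, rfl, hann⟩ := posneg_split hA h2 ξ hinv a
    obtain ⟨n, hn⟩ := mem_pComponent_z.mp ha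
    have hu0 : u = 0 := by
      have huc : u ∈ posPart ξ ⊓ pComponent A p :=
        ⟨hu, mem_pComponent_z.mpr ⟨n, (hann _ hn).1⟩⟩
      rw [hbot] at huc
      exact AddSubgroup.mem_bot.mp huc
    rw [hu0, zero_add, show ξ v = -v from hv]
  · intro hbot
    apply h
    apply central_of_id
    intro a ha
    obtain ⟨u, v, hu, hv, rfl, hann⟩ := posneg_split hA h2 ξ hinv a
    obtain ⟨n, hn⟩ := mem_pComponent_z.mp ha
    have hv0 : v = 0 := by
      have hvc : v ∈ negPart ξ ⊓ pComponent A p :=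
        ⟨hv, mem_pComponent_z.mpr ⟨n, (hann _ hn).2⟩⟩
      rw [hbot] at hvc
      exact AddSubgroup.mem_bot.mp hvc
    rw [hv0, add_zero, show ξ u = u from hu]

theorem extremal_off_component (hA : AddMonoid.IsTorsion A) (h2 : pComponent A 2 = ⊥)
    {ε₂ : AddAut A} {B₂ B₂p : AddSubgroup A} (hext : ExtremalWith ε₂ B₂ B₂p)
    {r : ℕ} (hB₂ : B₂ ≤ pComponent A r) :
    (∀ a ∈ coprimeComp A r, ε₂ a = a) ∨ (∀ a ∈ coprimeComp A r, ε₂ a = -a) := by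
  obtain ⟨hinv₂, hind, hcase⟩ := hext
  have key : ∀ a ∈ coprimeComp A r, ∀ u v : A, u ∈ posPart ε₂ → v ∈ negPart ε₂ →
      a = u + v → (∀ n : ℤ, n • a = 0 → n • u = 0 ∧ n • v = 0) →
      u ∈ coprimeComp A r ∧ v ∈ coprimeComp A r := by
    rintro a ⟨m, hm, hma⟩ u v hu hv rfl hann
    have hma' : ((m : ℤ)) • (u + v) = 0 := by rw [natCast_zsmul, hma]
    obtain ⟨h1, h2'⟩ := hann _ hma'
    constructor
    · exact ⟨m, hm, by rw [← natCast_zsmul u m]; exact h1⟩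
    · exact ⟨m, hm, by rw [← natCast_zsmul v m]; exact h2'⟩
  rcases hcase with ⟨hpos, hneg⟩ | ⟨hneg, hpos⟩
  · -- B₂ is the positive part
    right
    intro a ha
    obtain ⟨u, v, hu, hv, heq, hann⟩ := posneg_split hA h2 ε₂ hinv₂ a
    obtain ⟨huc, -⟩ := key a ha u v hu hv heq hann
    have : u ∈ B₂ := hpos ▸ hu
    have hu0 : u = 0 := by
      have : u ∈ pComponent A r ⊓ coprimeComp A r := ⟨hB₂ this, huc⟩
      rw [pComp_meet_coprimeComp] at this
      exact AddSubgroup.mem_bot.mp this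
    rw [heq, hu0, zero_add]
    rw [show ε₂ v = -v from hv]
  · -- B₂ is the negative part
    left
    intro a ha
    obtain ⟨u, v, hu, hv, heq, hann⟩ := posneg_split hA h2 ε₂ hinv₂ a
    obtain ⟨-, hvc⟩ := key a ha u v hu hv heq hann
    have : v ∈ B₂ := hneg ▸ hv
    have hv0 : v = 0 := by
      have : v ∈ pComponent A r ⊓ coprimeComp A r := ⟨hB₂ this, hvc⟩
      rw [pComp_meet_coprimeComp] at this
      exact AddSubgroup.mem_bot.mp this
    rw [heq, hv0, add_zero]
    rw [show ε₂ u = u from hu]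

theorem commute_of_central (hA : AddMonoid.IsTorsion A) (h2 : pComponent A 2 = ⊥)
    {ξ : AddAut A} {ε₂ : AddAut A} {B₂ B₂p : AddSubgroup A}
    (hext : ExtremalWith ε₂ B₂ B₂p) {r : ℕ} (hr : r.Prime)
    (hB₂ : B₂ ≤ pComponent A r)
    (hcen : restrictComp ξ r ∈ AddSubgroup.center (AddAut ↥(pComponent A r))) :
    ε₂ + ξ = ξ + ε₂ := by
  apply AddEquiv.ext
  intro a
  show ε₂ (ξ a) = ξ (ε₂ a)
  obtain ⟨b, ρ, hb, hρ, rfl, -⟩ := comp_split hA hr a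
  have claim1 : ε₂ (ξ b) = ξ (ε₂ b) := by
    have hcomm := AddSubgroup.mem_center_iff.mp hcen (restrictComp ε₂ r)
    have := DFunLike.congr_fun hcomm (⟨b, hb⟩ : ↥(pComponent A r))
    have hval := congrArg Subtype.val this
    exact hval
  have claim2 : ε₂ (ξ ρ) = ξ (ε₂ ρ) := by
    rcases extremal_off_component hA h2 hext hB₂ with hid | hneg
    · rw [hid (ξ ρ) (aut_mem_coprimeComp ξ hρ), hid ρ hρ]
    · rw [hneg (ξ ρ) (aut_mem_coprimeComp ξ hρ), hneg ρ hρ, map_neg]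
  rw [map_add, map_add, map_add, map_add, claim1, claim2]

/-- The negation automorphism. -/
def negAut : AddAut A :=
  { toFun := fun a => -a
    invFun := fun a => -a
    left_inv := neg_neg
    right_inv := neg_neg
    map_add' := fun a b => neg_add a b }

theorem negAut_apply (a : A) : (negAut : AddAut A) a = -a := rfl

theorem negAut_mul_comm (σ : AddAut A) : σ + negAut = negAut + σ := by
  apply AddEquiv.ext
  intro a
  show σ (-a) = -(σ a)
  rw [map_neg]

theorem posPart_negAut_mul (ξ : AddAut A) :
    _root_.posPart ((negAut : AddAut A) + ξ) = _root_.negPart ξ := by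
  ext a
  show ((negAut : AddAut A) + ξ) a = a ↔ ξ a = -a
  show -(ξ a) = a ↔ ξ a = -a
  exact neg_eq_iff_eq_neg

theorem negPart_negAut_mul (ξ : AddAut A) :
    _root_.negPart ((negAut : AddAut A) + ξ) = _root_.posPart ξ := by
  ext a
  show ((negAut : AddAut A) + ξ) a = -a ↔ ξ a = a
  show -(ξ a) = -a ↔ ξ a = a
  exact neg_inj

theorem negAut_mul_inv {ξ : AddAut A} (hinv : ξ + ξ = 0) :
    ((negAut : AddAut A) + ξ) + ((negAut : AddAut A) + ξ) = 0 := by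
  apply AddEquiv.ext
  intro a
  have hxx : ξ (ξ a) = a := by
    have := DFunLike.congr_fun hinv a
    simpa using this
  show ((negAut : AddAut A) + ξ) (((negAut : AddAut A) + ξ) a) = a
  show -(ξ (-(ξ a))) = a
  rw [map_neg, neg_neg, hxx]

theorem noncomm_negAut_mul {ξ ε : AddAut A} (h : ε + ξ ≠ ξ + ε) :
    ε + ((negAut : AddAut A) + ξ) ≠ ((negAut : AddAut A) + ξ) + ε := by
  intro hc
  apply h
  have h1 : ε + (negAut + ξ) = negAut + (ε + ξ) := by
    rw [← add_assoc, negAut_mul_comm ε, add_assoc]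
  have h2 : (negAut + ξ) + ε = negAut + (ξ + ε) := by rw [add_assoc]
  rw [h1, h2] at hc
  exact add_left_cancel hc


theorem exists_ne_zero_of_ne_bot {P : AddSubgroup A} (h : P ≠ ⊥) :
    ∃ a, a ∈ P ∧ a ≠ 0 := by
  by_contra hc
  push_neg at hc
  exact h (eq_bot_iff.mpr fun z hz => AddSubgroup.mem_bot.mpr (hc z hz))

/-- Construction of an extremal involution commuting with `ξ`, with indecomposable part
inside the `p`-component. -/
theorem commuting_extremal (hA : AddMonoid.IsTorsion A) (h2 : pComponent A 2 = ⊥)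
    {ξ : AddAut A} (hinv : ξ + ξ = 0) {p : ℕ} (hp : p.Prime)
    (hpos : _root_.posPart ξ ⊓ pComponent A p ≠ ⊥) :
    ∃ (ε : AddAut A) (B Bp : AddSubgroup A), ExtremalWith ε B Bp ∧
      B ≤ pComponent A p ∧ ε + ξ = ξ + ε := by
  set P := _root_.posPart ξ ⊓ pComponent A p with hP
  have hPp : P ≤ pComponent A p := inf_le_right
  obtain ⟨E, C, hEP, hCP, hind, hmeet, hjoin⟩ := summand hp P hPp hpos
  set Bp := C ⊔ ((_root_.negPart ξ ⊓ pComponent A p) ⊔ coprimeComp A p) with hBp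
  have hEpos : E ≤ _root_.posPart ξ := le_trans hEP inf_le_left
  have hEA : E ≤ pComponent A p := le_trans hEP inf_le_right
  have hCpos : C ≤ _root_.posPart ξ := le_trans hCP inf_le_left
  have hCA : C ≤ pComponent A p := le_trans hCP inf_le_right
  have hmeet2 : E ⊓ Bp = ⊥ := by
    rw [eq_bot_iff]
    rintro x ⟨hxE, hxBp⟩
    obtain ⟨c, hc, w, hw, hcw⟩ := AddSubgroup.mem_sup.mp hxBp
    obtain ⟨v, hv, ρ, hρ, hvρ⟩ := AddSubgroup.mem_sup.mp hw
    have hxeq : x = c + (v + ρ) := by rw [hvρ, hcw]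
    have hρeq : ρ = (x - c) - v := by rw [hxeq]; abel
    have hxc_pos : x - c ∈ _root_.posPart ξ := sub_mem (hEpos hxE) (hCpos hc)
    have hxc_p : x - c ∈ pComponent A p := sub_mem (hEA hxE) (hCA hc)
    have hρ_p : ρ ∈ pComponent A p := by
      rw [hρeq]
      exact sub_mem hxc_p ((inf_le_right : _root_.negPart ξ ⊓ pComponent A p ≤ _) hv)
    have hρ0 : ρ = 0 := by
      have : ρ ∈ pComponent A p ⊓ coprimeComp A p := ⟨hρ_p, hρ⟩
      rw [pComp_meet_coprimeComp] at this
      exact AddSubgroup.mem_bot.mp this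
    have hxcv : x - c = v := by rw [hρ0] at hρeq; rw [eq_comm, sub_eq_zero] at hρeq; rw [hρeq]
    have : x - c ∈ _root_.posPart ξ ⊓ _root_.negPart ξ := by
      refine ⟨hxc_pos, ?_⟩
      rw [hxcv]
      exact (inf_le_left : _root_.negPart ξ ⊓ pComponent A p ≤ _) hv
    rw [pos_meet_neg h2 ξ] at this
    have hxc : x = c := by
      have := AddSubgroup.mem_bot.mp this
      rw [sub_eq_zero] at this
      exact this
    have : x ∈ E ⊓ C := ⟨hxE, hxc ▸ hc⟩
    rw [hmeet] at this
    exact this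
  have hjoin2 : E ⊔ Bp = ⊤ := by
    rw [eq_top_iff]
    intro a _
    obtain ⟨b, ρ, hb, hρ, rfl, -⟩ := comp_split hA hp a
    obtain ⟨u, v, hu, hv, hbuv, hann⟩ := posneg_split hA h2 ξ hinv b
    obtain ⟨n, hn⟩ := mem_pComponent_z.mp hb
    have hu_p : u ∈ pComponent A p := mem_pComponent_z.mpr ⟨n, (hann _ hn).1⟩
    have hv_p : v ∈ pComponent A p := mem_pComponent_z.mpr ⟨n, (hann _ hn).2⟩
    have huEC : u ∈ E ⊔ C := by rw [hjoin]; exact ⟨hu, hu_p⟩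
    have hECle : E ⊔ C ≤ E ⊔ Bp := sup_le_sup_left (le_sup_left) E
    have hu' : u ∈ E ⊔ Bp := hECle huEC
    have hv' : v ∈ E ⊔ Bp :=
      (le_sup_right : Bp ≤ E ⊔ Bp)
        ((le_sup_right : (_root_.negPart ξ ⊓ pComponent A p) ⊔ coprimeComp A p ≤ Bp)
          ((le_sup_left : _root_.negPart ξ ⊓ pComponent A p ≤ _) ⟨hv, hv_p⟩))
    have hρ' : ρ ∈ E ⊔ Bp :=
      (le_sup_right : Bp ≤ E ⊔ Bp)
        ((le_sup_right : (_root_.negPart ξ ⊓ pComponent A p) ⊔ coprimeComp A p ≤ Bp)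
          ((le_sup_right : coprimeComp A p ≤ _) hρ))
    rw [hbuv]
    exact add_mem (add_mem hu' hv') hρ'
  obtain ⟨ε, hεinv, hεpos, hεneg, hεB, hεBp⟩ := flip_exists h2 E Bp hmeet2 hjoin2
  refine ⟨ε, E, Bp, ⟨hεinv, hind, Or.inr ⟨hεneg.symm, hεpos.symm⟩⟩, hEA, ?_⟩
  apply commute_of_invariant hA h2 ξ ε hεinv
  · rw [hεpos]
    intro a ha
    obtain ⟨c, hc, w, hw, hcw⟩ := AddSubgroup.mem_sup.mp ha
    obtain ⟨v, hv, ρ, hρ, hvρ⟩ := AddSubgroup.mem_sup.mp hw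
    have haeq : a = c + (v + ρ) := by rw [hvρ, hcw]
    have h1 : ξ c = c := hCpos hc
    have h2' : ξ v = -v := (inf_le_left : _root_.negPart ξ ⊓ pComponent A p ≤ _) hv
    have hmv : -v ∈ _root_.negPart ξ ⊓ pComponent A p := neg_mem hv
    have h3 : ξ ρ ∈ coprimeComp A p := aut_mem_coprimeComp ξ hρ
    rw [haeq, map_add, map_add, h1, h2']
    refine add_mem ((le_sup_left : C ≤ Bp) hc) (add_mem ?_ ?_)
    · exact (le_sup_right : _ ≤ Bp)
        ((le_sup_left : _root_.negPart ξ ⊓ pComponent A p ≤ _) hmv)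
    · exact (le_sup_right : _ ≤ Bp) ((le_sup_right : coprimeComp A p ≤ _) h3)
  · rw [hεneg]
    intro a ha
    have : ξ a = a := hEpos ha
    rw [this]
    exact ha


theorem prime_ne_two (h2 : pComponent A 2 = ⊥) {p : ℕ} (hp : p.Prime)
    (hnb : ∃ a : A, a ∈ pComponent A p ∧ a ≠ 0) : p ≠ 2 := by
  rintro rfl
  obtain ⟨a, ha, ha0⟩ := hnb
  rw [h2] at ha
  exact ha0 (AddSubgroup.mem_bot.mp ha)

theorem int_two_dvd_to_eq {p : ℕ} (hp : p.Prime) (h : (p : ℤ) ∣ 2) : p = 2 := by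
  have h2 : ((p : ℤ)) ∣ ((2 : ℕ) : ℤ) := by exact_mod_cast h
  have := Int.natCast_dvd_natCast.mp h2
  exact (Nat.prime_dvd_prime_iff_eq hp Nat.prime_two).mp this

/-- Non-commuting extremal involution: twisted cyclic case. -/
theorem noncommuting_extremal_cyclic (hA : AddMonoid.IsTorsion A)
    (h2 : pComponent A 2 = ⊥) {ξ : AddAut A} (hinv : ξ + ξ = 0) {p : ℕ} (hp : p.Prime)
    (hneg : _root_.negPart ξ ⊓ pComponent A p ≠ ⊥)
    (hfin : ∃ a, a ∈ _root_.posPart ξ ⊓ pComponent A p ∧ a ≠ 0 ∧ (p : ℤ) • a = 0 ∧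
      ∃ j, a ∉ pImage p j (_root_.posPart ξ ⊓ pComponent A p)) :
    ∃ (ε₁ : AddAut A) (B₁ B₁p : AddSubgroup A), ExtremalWith ε₁ B₁ B₁p ∧
      B₁ ≤ pComponent A p ∧ ε₁ + ξ ≠ ξ + ε₁ := by
  classical
  set Pp := _root_.posPart ξ ⊓ pComponent A p with hPp
  obtain ⟨a, haP, ha0, hap, hj⟩ := hfin
  have hp2 : p ≠ 2 := prime_ne_two h2 hp ⟨a, (inf_le_right : Pp ≤ _) haP, ha0⟩
  -- maximal height n and preimage b
  have h0 : a ∈ pImage p 0 Pp :=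
    ⟨a, haP, by show (p:ℤ)^0 • a = a; rw [pow_zero, one_smul]⟩
  set j₁ := Nat.find hj with hj₁
  have hspec : a ∉ pImage p j₁ Pp := Nat.find_spec hj
  have hj₁0 : j₁ ≠ 0 := by
    intro h
    rw [h] at hspec
    exact hspec h0
  obtain ⟨n, hn⟩ : ∃ n, j₁ = n + 1 := ⟨j₁ - 1, by omega⟩
  have hmem : a ∈ pImage p n Pp := by
    by_contra h
    exact absurd (Nat.find_min hj (by omega : n < j₁)) (fun h' => h' h)
  obtain ⟨b, hbPmap, hbamap⟩ := hmem
  have hbP : b ∈ Pp := hbPmap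
  have hba : (p : ℤ) ^ n • b = a := hbamap
  have hnot : a ∉ pImage p (n + 1) Pp := hn ▸ hspec
  have hbord : (p : ℤ) ^ (n + 1) • b = 0 := by
    rw [pow_succ, mul_comm, mul_smul, hba, hap]
  have hb0 : b ≠ 0 := by
    intro h
    rw [h, smul_zero] at hba
    exact ha0 hba.symm
  -- order-p element w in the negative part
  obtain ⟨x₀, hx₀, hx₀0⟩ := exists_ne_zero_of_ne_bot hneg
  obtain ⟨w, hwN, hw0, hwp⟩ :=
    socle_elt (inf_le_right : _root_.negPart ξ ⊓ pComponent A p ≤ _) hx₀ hx₀0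
  have hwneg : w ∈ _root_.negPart ξ :=
    (inf_le_left : _root_.negPart ξ ⊓ pComponent A p ≤ _) hwN
  have hwA : w ∈ pComponent A p :=
    (inf_le_right : _root_.negPart ξ ⊓ pComponent A p ≤ _) hwN
  have hbpos : b ∈ _root_.posPart ξ := (inf_le_left : Pp ≤ _) hbP
  have hbA : b ∈ pComponent A p := (inf_le_right : Pp ≤ _) hbP
  have hapos : a ∈ _root_.posPart ξ := (inf_le_left : Pp ≤ _) haP
  -- the twisted generator
  set bt := b + w with hbt
  set g := a + (p : ℤ) ^ n • w with hg
  have hgbt : (p : ℤ) ^ n • bt = g := by rw [hbt, smul_add, hba]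
  have hbtord : (p : ℤ) ^ (n + 1) • bt = 0 := by
    rw [hbt, smul_add, hbord, zero_add, pow_succ, mul_smul, hwp, smul_zero]
  have hpnw_neg : (p : ℤ) ^ n • w ∈ _root_.negPart ξ := (_root_.negPart ξ).zsmul_mem hwneg _
  have hpnw_A : (p : ℤ) ^ n • w ∈ pComponent A p := (pComponent A p).zsmul_mem hwA _
  have hg0 : g ≠ 0 := by
    intro h
    have : a = -((p : ℤ) ^ n • w) := by
      rw [eq_neg_iff_add_eq_zero]; exact h
    have haneg : a ∈ _root_.negPart ξ := this ▸ neg_mem hpnw_neg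
    have : a ∈ _root_.posPart ξ ⊓ _root_.negPart ξ := ⟨hapos, haneg⟩
    rw [pos_meet_neg h2 ξ] at this
    exact ha0 (AddSubgroup.mem_bot.mp this)
  have hsoc : ∀ z ∈ zmultiples bt, z ≠ 0 → g ∈ zmultiples z := by
    intro z hz hz0
    obtain ⟨k, rfl⟩ := mem_zmultiples_iff.mp hz
    have := cyclic_socle hp n bt hbtord (by rw [hgbt]; exact hg0) k hz0
    rwa [hgbt] at this
  set seed := pImage p (n + 1) (⊤ : AddSubgroup A) ⊔ coprimeComp A p with hseed
  have hgA : g ∈ pComponent A p := add_mem ((inf_le_right : Pp ≤ _) haP) hpnw_A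
  have hbtA : bt ∈ pComponent A p := add_mem hbA hwA
  have hgseed : g ∉ seed := by
    intro hmem'
    obtain ⟨s, hs, ρ, hρ, hsρ⟩ := AddSubgroup.mem_sup.mp hmem'
    obtain ⟨t, -, hts⟩ := hs
    have hts' : (p : ℤ) ^ (n + 1) • t = s := hts
    obtain ⟨tp, ρ₂, htp, hρ₂, hteq, -⟩ := comp_split hA hp t
    obtain ⟨u, v, hu, hv, htpuv, hann⟩ := posneg_split hA h2 ξ hinv tp
    obtain ⟨m, hm⟩ := mem_pComponent_z.mp htp
    have hu_p : u ∈ pComponent A p := mem_pComponent_z.mpr ⟨m, (hann _ hm).1⟩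
    have hv_p : v ∈ pComponent A p := mem_pComponent_z.mpr ⟨m, (hann _ hm).2⟩
    -- g = p^{n+1}u + p^{n+1}v + p^{n+1}ρ₂ + ρ
    have hgexp : g = (p:ℤ)^(n+1) • u + (p:ℤ)^(n+1) • v + ((p:ℤ)^(n+1) • ρ₂ + ρ) := by
      rw [← hsρ, ← hts', hteq, htpuv, smul_add, smul_add]
      abel
    set L := g - (p:ℤ)^(n+1) • u - (p:ℤ)^(n+1) • v with hL
    have hLp : L ∈ pComponent A p := by
      rw [hL]
      exact sub_mem (sub_mem hgA ((pComponent A p).zsmul_mem hu_p _))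
        ((pComponent A p).zsmul_mem hv_p _)
    have hLcop : L ∈ coprimeComp A p := by
      have : L = (p:ℤ)^(n+1) • ρ₂ + ρ := by rw [hL, hgexp]; abel
      rw [this]
      exact add_mem ((coprimeComp A p).zsmul_mem hρ₂ _) hρ
    have hL0 : L = 0 := by
      have : L ∈ pComponent A p ⊓ coprimeComp A p := ⟨hLp, hLcop⟩
      rw [pComp_meet_coprimeComp] at this
      exact AddSubgroup.mem_bot.mp this
    -- a - p^{n+1}u = p^{n+1}v - p^n w
    have h' : a + (p:ℤ)^n • w - (p:ℤ)^(n+1) • u - (p:ℤ)^(n+1) • v = 0 := hL0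
    have hsplit : a - (p:ℤ)^(n+1) • u = (p:ℤ)^(n+1) • v - (p:ℤ)^n • w := by
      have key : a - (p:ℤ)^(n+1) • u - ((p:ℤ)^(n+1) • v - (p:ℤ)^n • w) = 0 := by
        have e : a - (p:ℤ)^(n+1) • u - ((p:ℤ)^(n+1) • v - (p:ℤ)^n • w)
            = a + (p:ℤ)^n • w - (p:ℤ)^(n+1) • u - (p:ℤ)^(n+1) • v := by abel
        rw [e, h']
      exact sub_eq_zero.mp key
    have hlhs_pos : a - (p:ℤ)^(n+1) • u ∈ _root_.posPart ξ :=
      sub_mem hapos ((_root_.posPart ξ).zsmul_mem hu _)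
    have hrhs_neg : (p:ℤ)^(n+1) • v - (p:ℤ)^n • w ∈ _root_.negPart ξ :=
      sub_mem ((_root_.negPart ξ).zsmul_mem hv _) ((_root_.negPart ξ).zsmul_mem hwneg _)
    have hz : a - (p:ℤ)^(n+1) • u ∈ _root_.posPart ξ ⊓ _root_.negPart ξ :=
      ⟨hlhs_pos, hsplit ▸ hrhs_neg⟩
    rw [pos_meet_neg h2 ξ] at hz
    have hau : a = (p:ℤ)^(n+1) • u := by
      have := AddSubgroup.mem_bot.mp hz
      rw [sub_eq_zero] at this
      exact this
    exact hnot ⟨u, ⟨hu, hu_p⟩, hau.symm⟩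
  -- torsion/cover hypothesis for the engine over the whole group
  have htor : ∀ x ∈ (⊤ : AddSubgroup A), ∃ y ∈ (⊤ : AddSubgroup A),
      (∃ k : ℕ, (p : ℤ) ^ k • y = 0) ∧ x - y ∈ seed := by
    intro x _
    obtain ⟨y, ρ, hy, hρ, rfl, -⟩ := comp_split hA hp x
    refine ⟨y, AddSubgroup.mem_top y, mem_pComponent_z.mp hy, ?_⟩
    have : y + ρ - y = ρ := by abel
    rw [this]
    exact (le_sup_right : coprimeComp A p ≤ seed) hρ
  have hEtop : zmultiples bt ≤ (⊤ : AddSubgroup A) := le_top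
  have hgE : g ∈ zmultiples bt := mem_zmultiples_iff.mpr ⟨(p:ℤ)^n, hgbt⟩
  obtain ⟨C, -, hmeetC, hjoinC⟩ :=
    complement_engine hp ⊤ (zmultiples bt) seed hEtop le_top hgE hg0 hsoc hgseed htor
      (cyclic_crux hp hbtord hgbt
        (fun x _ => (le_sup_left : pImage p (n+1) ⊤ ≤ seed) ⟨x, AddSubgroup.mem_top x, rfl⟩))
  obtain ⟨ε₁, hεinv, hεpos, hεneg, hεB, hεBp⟩ := flip_exists h2 (zmultiples bt) C hmeetC hjoinC
  have hB₁A : zmultiples bt ≤ pComponent A p := by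
    intro z hz
    obtain ⟨k, rfl⟩ := mem_zmultiples_iff.mp hz
    exact (pComponent A p).zsmul_mem hbtA k
  refine ⟨ε₁, zmultiples bt, C,
    ⟨hεinv, indecomp_of_socle hgE hg0 hsoc, Or.inr ⟨hεneg.symm, hεpos.symm⟩⟩, hB₁A, ?_⟩
  -- non-commuting
  intro hcomm
  obtain ⟨-, hneg_inv⟩ := invariant_of_commute hcomm
  rw [hεneg] at hneg_inv
  have hbtmem : bt ∈ zmultiples bt := mem_zmultiples bt
  have hξbt : ξ bt = b - w := by
    rw [hbt, map_add, show ξ b = b from hbpos, show ξ w = -w from hwneg]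
    abel
  have : b - w ∈ zmultiples bt := hξbt ▸ hneg_inv bt hbtmem
  obtain ⟨k, hk⟩ := mem_zmultiples_iff.mp this
  -- derive p ∣ 2
  have key : (1 - k) • b - (k + 1) • w = 0 := by
    have e : (1 - k) • b - (k + 1) • w = (b - w) - k • (b + w) := by
      rw [smul_add, sub_smul, add_smul, one_smul]
      abel
    rw [e, ← hbt, hk, sub_self]
  have he : (1 - k) • b = (k + 1) • w := sub_eq_zero.mp key
  have hzz : (1 - k) • b ∈ _root_.posPart ξ ⊓ _root_.negPart ξ :=
    ⟨(_root_.posPart ξ).zsmul_mem hbpos _, he ▸ (_root_.negPart ξ).zsmul_mem hwneg _⟩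
  rw [pos_meet_neg h2 ξ] at hzz
  have hb_ann : (1 - k) • b = 0 := AddSubgroup.mem_bot.mp hzz
  have hw_ann : (k + 1) • w = 0 := by rw [← he]; exact hb_ann
  have hd1 : (p : ℤ) ∣ (1 - k) := prime_dvd_of_smul_eq_zero hp hbord hb0 hb_ann
  have hd2 : (p : ℤ) ∣ (k + 1) :=
    prime_dvd_of_smul_eq_zero hp (by rw [pow_one]; exact hwp) hw0 hw_ann
  have hd : (p : ℤ) ∣ 2 := by
    have : (1 - k) + (k + 1) = 2 := by ring
    exact this ▸ dvd_add hd1 hd2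
  exact hp2 (int_two_dvd_to_eq hp hd)


theorem div_of_no_finite_height {p : ℕ} (hp : p.Prime) {P : AddSubgroup A}
    (hPp : P ≤ pComponent A p)
    (hfin : ∀ a, a ∈ P → a ≠ 0 → (p : ℤ) • a = 0 → ∀ j, a ∈ pImage p j P) :
    ∀ x ∈ P, ∃ y ∈ P, (p : ℤ) • y = x := by
  have aux : ∀ (k : ℕ) (x : A), x ∈ P → (p : ℤ) ^ k • x = 0 → ∃ y ∈ P, (p : ℤ) • y = x := by
    intro k
    induction k with
    | zero =>
      intro x hx h0
      rw [pow_zero, one_smul] at h0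
      exact ⟨0, zero_mem _, by rw [smul_zero, h0]⟩
    | succ k ih =>
      intro x hx h0
      by_cases hz : (p : ℤ) ^ k • x = 0
      · exact ih x hx hz
      · have hzP : (p : ℤ) ^ k • x ∈ P := P.zsmul_mem hx _
        have hzp : (p : ℤ) • ((p : ℤ) ^ k • x) = 0 := by
          rw [smul_smul, ← pow_succ', h0]
        have := hfin ((p:ℤ)^k • x) hzP hz hzp
        obtain ⟨w, hwPmap, hwmap⟩ := this (k + 1)
        have hwP : w ∈ P := hwPmap
        have hw : (p : ℤ) ^ (k + 1) • w = (p : ℤ) ^ k • x := hwmap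
        have hsub : (p : ℤ) ^ k • (x - (p : ℤ) • w) = 0 := by
          rw [smul_sub]
          have he : (p:ℤ)^k • ((p:ℤ) • w) = (p:ℤ)^(k+1) • w := by
            rw [smul_smul, ← pow_succ]
          rw [he, hw, sub_self]
        obtain ⟨y', hy'P, hy'⟩ := ih (x - (p : ℤ) • w) (sub_mem hx (P.zsmul_mem hwP _)) hsub
        refine ⟨w + y', add_mem hwP hy'P, ?_⟩
        rw [smul_add, hy']
        abel
  intro x hx
  obtain ⟨k, hk⟩ := mem_pComponent_z.mp (hPp hx)
  exact aux k x hx hk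

theorem chain_of_div {p : ℕ} {P : AddSubgroup A}
    (hdiv : ∀ x ∈ P, ∃ y ∈ P, (p : ℤ) • y = x) {a : A} (haP : a ∈ P) :
    ∃ f : ℕ → A, (∀ i, f i ∈ P) ∧ f 0 = a ∧ ∀ i, (p : ℤ) • f (i + 1) = f i := by
  choose F hFP hFp using hdiv
  let seq : ℕ → {z : A // z ∈ P} := fun n =>
    Nat.rec ⟨a, haP⟩ (fun _ prev => ⟨F prev.1 prev.2, hFP _ _⟩) n
  exact ⟨fun n => (seq n).1, fun n => (seq n).2, rfl, fun i => hFp _ _⟩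

/-- Non-commuting extremal involution: twisted Prüfer case. -/
theorem noncommuting_extremal_div (hA : AddMonoid.IsTorsion A)
    (h2 : pComponent A 2 = ⊥) {ξ : AddAut A} (hinv : ξ + ξ = 0) {p : ℕ} (hp : p.Prime)
    (hpos : _root_.posPart ξ ⊓ pComponent A p ≠ ⊥)
    (hneg : _root_.negPart ξ ⊓ pComponent A p ≠ ⊥)
    (hdfpos : ∀ a, a ∈ _root_.posPart ξ ⊓ pComponent A p → a ≠ 0 → (p : ℤ) • a = 0 →
      ∀ j, a ∈ pImage p j (_root_.posPart ξ ⊓ pComponent A p))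
    (hdfneg : ∀ a, a ∈ _root_.negPart ξ ⊓ pComponent A p → a ≠ 0 → (p : ℤ) • a = 0 →
      ∀ j, a ∈ pImage p j (_root_.negPart ξ ⊓ pComponent A p)) :
    ∃ (ε₁ : AddAut A) (B₁ B₁p : AddSubgroup A), ExtremalWith ε₁ B₁ B₁p ∧
      B₁ ≤ pComponent A p ∧ ε₁ + ξ ≠ ξ + ε₁ := by
  classical
  set Pp := _root_.posPart ξ ⊓ pComponent A p with hPpdef
  set Pn := _root_.negPart ξ ⊓ pComponent A p with hPndef
  have hPpA : Pp ≤ pComponent A p := inf_le_right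
  have hPnA : Pn ≤ pComponent A p := inf_le_right
  have hp2 : p ≠ 2 := by
    obtain ⟨a, ha, ha0⟩ := exists_ne_zero_of_ne_bot hpos
    exact prime_ne_two h2 hp ⟨a, hPpA ha, ha0⟩
  -- socle elements
  obtain ⟨a₁, ha₁, ha₁0⟩ := exists_ne_zero_of_ne_bot hpos
  obtain ⟨ap, hapP, hap0, happ⟩ := socle_elt hPpA ha₁ ha₁0
  obtain ⟨a₂, ha₂, ha₂0⟩ := exists_ne_zero_of_ne_bot hneg
  obtain ⟨an, hanP, han0, hanp⟩ := socle_elt hPnA ha₂ ha₂0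
  -- chains
  obtain ⟨x, hxP, hx0, hxstep⟩ :=
    chain_of_div (div_of_no_finite_height hp hPpA hdfpos) hapP
  obtain ⟨y, hyP, hy0, hystep⟩ :=
    chain_of_div (div_of_no_finite_height hp hPnA hdfneg) hanP
  have hx00 : x 0 ≠ 0 := hx0 ▸ hap0
  have hy00 : y 0 ≠ 0 := hy0 ▸ han0
  have hx0p : (p : ℤ) • x 0 = 0 := by rw [hx0]; exact happ
  have hy0p : (p : ℤ) • y 0 = 0 := by rw [hy0]; exact hanp
  have hxpos : ∀ i, x i ∈ _root_.posPart ξ := fun i => (inf_le_left : Pp ≤ _) (hxP i)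
  have hxA : ∀ i, x i ∈ pComponent A p := fun i => hPpA (hxP i)
  have hyneg : ∀ i, y i ∈ _root_.negPart ξ := fun i => (inf_le_left : Pn ≤ _) (hyP i)
  have hyA : ∀ i, y i ∈ pComponent A p := fun i => hPnA (hyP i)
  -- the twisted chain
  set z : ℕ → A := fun i => x i + y i with hz
  have hzstep : ∀ i, (p : ℤ) • z (i + 1) = z i := by
    intro i
    show (p:ℤ) • (x (i+1) + y (i+1)) = x i + y i
    rw [smul_add, hxstep, hystep]
  have hz00 : z 0 ≠ 0 := by
    intro h
    have : x 0 = -(y 0) := by rw [eq_neg_iff_add_eq_zero]; exact h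
    have hx0neg : x 0 ∈ _root_.negPart ξ := this ▸ neg_mem (hyneg 0)
    have : x 0 ∈ _root_.posPart ξ ⊓ _root_.negPart ξ := ⟨hxpos 0, hx0neg⟩
    rw [pos_meet_neg h2 ξ] at this
    exact hx00 (AddSubgroup.mem_bot.mp this)
  have hz0p : (p : ℤ) • z 0 = 0 := by
    show (p:ℤ) • (x 0 + y 0) = 0
    rw [smul_add, hx0p, hy0p, add_zero]
  have hzA : ∀ i, z i ∈ pComponent A p := fun i => add_mem (hxA i) (hyA i)
  set E := ⨆ i, zmultiples (z i) with hE
  have hgE : z 0 ∈ E := le_iSup (fun i => zmultiples (z i)) 0 (mem_zmultiples (z 0))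
  have hsoc : ∀ u ∈ E, u ≠ 0 → z 0 ∈ zmultiples u := by
    intro u hu hu0
    obtain ⟨i, hi⟩ := (chain_mem hzstep).mp hu
    obtain ⟨k, rfl⟩ := mem_zmultiples_iff.mp hi
    have := cyclic_socle hp i (z i) (chain_ann hz0p hzstep i) ?_ k hu0
    · rwa [chain_pow_smul hzstep i] at this
    · rw [chain_pow_smul hzstep i]; exact hz00
  have hEA : E ≤ pComponent A p := by
    apply iSup_le
    intro i u hu
    obtain ⟨k, rfl⟩ := mem_zmultiples_iff.mp hu
    exact (pComponent A p).zsmul_mem (hzA i) k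
  have hgseed : z 0 ∉ coprimeComp A p := by
    intro h
    have : z 0 ∈ pComponent A p ⊓ coprimeComp A p := ⟨hzA 0, h⟩
    rw [pComp_meet_coprimeComp] at this
    exact hz00 (AddSubgroup.mem_bot.mp this)
  have htor : ∀ u ∈ (⊤ : AddSubgroup A), ∃ v ∈ (⊤ : AddSubgroup A),
      (∃ k : ℕ, (p : ℤ) ^ k • v = 0) ∧ u - v ∈ coprimeComp A p := by
    intro u _
    obtain ⟨v, ρ, hv, hρ, rfl, -⟩ := comp_split hA hp u
    refine ⟨v, AddSubgroup.mem_top v, mem_pComponent_z.mp hv, ?_⟩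
    have : v + ρ - v = ρ := by abel
    rw [this]
    exact hρ
  have hcrux : ∀ C : AddSubgroup A, coprimeComp A p ≤ C → C ≤ ⊤ → z 0 ∉ C →
      ∀ u ∈ (⊤ : AddSubgroup A), (p : ℤ) • u ∈ E ⊔ C →
        ∃ e ∈ E, (p : ℤ) • u - (p : ℤ) • e ∈ C := by
    intro C _ _ _ u _ hpu
    obtain ⟨w, hw, c, hc, hwc⟩ := AddSubgroup.mem_sup.mp hpu
    obtain ⟨i, hi⟩ := (chain_mem hzstep).mp hw
    obtain ⟨k, rfl⟩ := mem_zmultiples_iff.mp hi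
    refine ⟨k • z (i + 1),
      (le_iSup (fun i => zmultiples (z i)) (i+1)) (zsmul_mem (mem_zmultiples _) k), ?_⟩
    have h1 : (p : ℤ) • (k • z (i + 1)) = k • z i := by rw [smul_comm, hzstep]
    rw [h1]
    have h2' : (p : ℤ) • u - k • z i = c := by rw [← hwc]; abel
    rw [h2']; exact hc
  obtain ⟨C, -, hmeetC, hjoinC⟩ :=
    complement_engine hp ⊤ E (coprimeComp A p) le_top le_top hgE hz00 hsoc hgseed htor hcrux
  obtain ⟨ε₁, hεinv, hεpos, hεneg, hεB, hεBp⟩ := flip_exists h2 E C hmeetC hjoinC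
  refine ⟨ε₁, E, C, ⟨hεinv, indecomp_of_socle hgE hz00 hsoc, Or.inr ⟨hεneg.symm, hεpos.symm⟩⟩,
    hEA, ?_⟩
  intro hcomm
  obtain ⟨-, hneg_inv⟩ := invariant_of_commute hcomm
  rw [hεneg] at hneg_inv
  have hξz0 : ξ (z 0) = x 0 - y 0 := by
    show ξ (x 0 + y 0) = x 0 - y 0
    rw [map_add, show ξ (x 0) = x 0 from hxpos 0, show ξ (y 0) = -(y 0) from hyneg 0]
    abel
  have hmem : x 0 - y 0 ∈ E := hξz0 ▸ hneg_inv (z 0) hgE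
  obtain ⟨i, hi⟩ := (chain_mem hzstep).mp hmem
  obtain ⟨k, hk⟩ := mem_zmultiples_iff.mp hi
  -- k • (x i + y i) = x 0 - y 0
  have key : (k • x i - x 0) - (-(k • y i + y 0)) = 0 := by
    have e : (k • x i - x 0) - (-(k • y i + y 0)) = k • z i - (x 0 - y 0) := by
      show (k • x i - x 0) - (-(k • y i + y 0)) = k • (x i + y i) - (x 0 - y 0)
      rw [smul_add]
      abel
    rw [e, hk, sub_self]
  have he : k • x i - x 0 = -(k • y i + y 0) := sub_eq_zero.mp key
  have hzz : k • x i - x 0 ∈ _root_.posPart ξ ⊓ _root_.negPart ξ := by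
    constructor
    · exact (_root_.posPart ξ).sub_mem ((_root_.posPart ξ).zsmul_mem (hxpos i) k) (hxpos 0)
    · rw [he]
      exact (_root_.negPart ξ).neg_mem
        ((_root_.negPart ξ).add_mem ((_root_.negPart ξ).zsmul_mem (hyneg i) k) (hyneg 0))
  rw [pos_meet_neg h2 ξ] at hzz
  have hx_ann : (k - (p:ℤ)^i) • x i = 0 := by
    have h1 : k • x i = x 0 := by
      have := AddSubgroup.mem_bot.mp hzz
      rw [sub_eq_zero] at this
      exact this
    rw [sub_smul, h1, chain_pow_smul hxstep i, sub_self]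
  have hy_ann : (k + (p:ℤ)^i) • y i = 0 := by
    have h1 : k • y i = -(y 0) := by
      have h2' : k • x i - x 0 = 0 := AddSubgroup.mem_bot.mp hzz
      rw [h2'] at he
      have : k • y i + y 0 = 0 := by
        have := he.symm
        rw [neg_eq_zero] at this
        exact this
      rw [eq_neg_iff_add_eq_zero]
      exact this
    rw [add_smul, h1, chain_pow_smul hystep i, neg_add_cancel]
  have hd1 : (p:ℤ)^(i+1) ∣ (k - (p:ℤ)^i) := chain_ann_dvd hp hx00 hx0p hxstep i _ hx_ann
  have hd2 : (p:ℤ)^(i+1) ∣ (k + (p:ℤ)^i) := chain_ann_dvd hp hy00 hy0p hystep i _ hy_ann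
  have hd : (p:ℤ)^(i+1) ∣ (p:ℤ)^i * 2 := by
    have : (k + (p:ℤ)^i) - (k - (p:ℤ)^i) = (p:ℤ)^i * 2 := by ring
    exact this ▸ dvd_sub hd2 hd1
  have hdp : (p : ℤ) ∣ 2 := by
    have hne : (p:ℤ)^i ≠ 0 := pow_ne_zero i (by exact_mod_cast hp.ne_zero)
    have : (p:ℤ)^(i+1) = (p:ℤ)^i * (p:ℤ) := pow_succ _ _
    rw [this] at hd
    exact (mul_dvd_mul_iff_left hne).mp hd
  exact hp2 (int_two_dvd_to_eq hp hdp)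

/-- Non-commuting extremal involution in a component where `ξ` is noncentral-ish. -/
theorem noncommuting_extremal (hA : AddMonoid.IsTorsion A) (h2 : pComponent A 2 = ⊥)
    {ξ : AddAut A} (hinv : ξ + ξ = 0) {p : ℕ} (hp : p.Prime)
    (hpos : _root_.posPart ξ ⊓ pComponent A p ≠ ⊥)
    (hneg : _root_.negPart ξ ⊓ pComponent A p ≠ ⊥) :
    ∃ (ε₁ : AddAut A) (B₁ B₁p : AddSubgroup A), ExtremalWith ε₁ B₁ B₁p ∧
      B₁ ≤ pComponent A p ∧ ε₁ + ξ ≠ ξ + ε₁ := by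
  by_cases hf1 : ∃ a, a ∈ _root_.posPart ξ ⊓ pComponent A p ∧ a ≠ 0 ∧ (p : ℤ) • a = 0 ∧
      ∃ j, a ∉ pImage p j (_root_.posPart ξ ⊓ pComponent A p)
  · exact noncommuting_extremal_cyclic hA h2 hinv hp hneg hf1
  by_cases hf2 : ∃ a, a ∈ _root_.negPart ξ ⊓ pComponent A p ∧ a ≠ 0 ∧ (p : ℤ) • a = 0 ∧
      ∃ j, a ∉ pImage p j (_root_.negPart ξ ⊓ pComponent A p)
  · -- apply the cyclic case to negAut * ξ
    have hinv' : ((negAut : AddAut A) + ξ) + ((negAut : AddAut A) + ξ) = 0 := negAut_mul_inv hinv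
    have hneg' : _root_.negPart ((negAut : AddAut A) + ξ) ⊓ pComponent A p ≠ ⊥ := by
      rw [negPart_negAut_mul]; exact hpos
    have hf2' : ∃ a, a ∈ _root_.posPart ((negAut : AddAut A) + ξ) ⊓ pComponent A p ∧ a ≠ 0 ∧
        (p : ℤ) • a = 0 ∧
        ∃ j, a ∉ pImage p j (_root_.posPart ((negAut : AddAut A) + ξ) ⊓ pComponent A p) := by
      rw [posPart_negAut_mul]; exact hf2
    obtain ⟨ε₁, B₁, B₁p, hext, hB₁, hnc⟩ :=
      noncommuting_extremal_cyclic hA h2 hinv' hp hneg' hf2'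
    refine ⟨ε₁, B₁, B₁p, hext, hB₁, ?_⟩
    intro hc
    apply hnc
    have hνν : (negAut : AddAut A) + negAut = 0 := by
      apply AddEquiv.ext
      intro a
      show -(-a) = a
      rw [neg_neg]
    calc ε₁ + ((negAut : AddAut A) + ξ) = negAut + (ε₁ + ξ) := by
          rw [← add_assoc, negAut_mul_comm ε₁, add_assoc]
      _ = negAut + (ξ + ε₁) := by rw [hc]
      _ = ((negAut : AddAut A) + ξ) + ε₁ := by rw [add_assoc]
  · push_neg at hf1 hf2
    exact noncommuting_extremal_div hA h2 hinv hp hpos hneg hf1 hf2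

end St13


/-- Let `A` be a periodic abelian group with trivial `2`-component and
no cocyclic `p`-components.  A non-central involution `ξ` is *normal* (there is exactly
one prime `p` such that the restriction of `ξ` to `A_p` is not central in `Aut A_p`) if
and only if there is an extremal involution `ε` commuting with `ξ` such that some
extremal involution in the same component as `ε` does not commute with `ξ`, while every
extremal involution in a different component than `ε` commutes with `ξ`. -/
theorem normal_involution_iff
    (A : Type*) [AddCommGroup A] (hA : AddMonoid.IsTorsion A)
    (h2 : pComponent A 2 = ⊥)
    (hcc : ∀ p : ℕ, p.Prime → ¬ IsCocyclic ↥(pComponent A p))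
    (ξ : AddAut A) (hinv : ξ + ξ = 0) (hnc : ξ ∉ AddSubgroup.center (AddAut A)) :
    (∃! p : ℕ, p.Prime ∧
        restrictComp ξ p ∉ AddSubgroup.center (AddAut ↥(pComponent A p))) ↔
      ∃ (ε : AddAut A) (B Bp : AddSubgroup A), ExtremalWith ε B Bp ∧ ε + ξ = ξ + ε ∧
        (∃ (ε₁ : AddAut A) (B₁ B₁p : AddSubgroup A) (q : ℕ),
          ExtremalWith ε₁ B₁ B₁p ∧ q.Prime ∧
          B ≤ pComponent A q ∧ B₁ ≤ pComponent A q ∧ ε₁ + ξ ≠ ξ + ε₁) ∧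
        (∀ (ε₂ : AddAut A) (B₂ B₂p : AddSubgroup A), ExtremalWith ε₂ B₂ B₂p →
          (∃ q r : ℕ, q.Prime ∧ r.Prime ∧ q ≠ r ∧
            B ≤ pComponent A q ∧ B₂ ≤ pComponent A r) →
          ε₂ + ξ = ξ + ε₂) := by
  constructor
  · rintro ⟨p, ⟨hp, hncp⟩, huniq⟩
    obtain ⟨hpos, hneg⟩ := St13.parts_nonbot hA h2 hinv hncp
    obtain ⟨ε, B, Bp, hext, hBA, hcomm⟩ := St13.commuting_extremal hA h2 hinv hp hpos
    obtain ⟨ε₁, B₁, B₁p, hext₁, hB₁A, hnc₁⟩ :=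
      St13.noncommuting_extremal hA h2 hinv hp hpos hneg
    refine ⟨ε, B, Bp, hext, hcomm, ⟨ε₁, B₁, B₁p, p, hext₁, hp, hBA, hB₁A, hnc₁⟩, ?_⟩
    rintro ε₂ B₂ B₂p hext₂ ⟨q, r, hq, hr, hqr, hBq, hB₂r⟩
    have hBbot : B ≠ ⊥ := hext.2.1.1
    have hqp : q = p := by
      by_contra hne
      have hle : B ≤ pComponent A q ⊓ pComponent A p := le_inf hBq hBA
      rw [St13.pComp_meet_pComp hq hp hne] at hle
      exact hBbot (le_bot_iff.mp hle)
    have hrp : r ≠ p := by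
      intro h
      exact hqr (by rw [hqp, h])
    have hcen : restrictComp ξ r ∈ AddSubgroup.center (AddAut ↥(pComponent A r)) := by
      by_contra hcen
      exact hrp (huniq r ⟨hr, hcen⟩)
    exact St13.commute_of_central hA h2 hext₂ hr hB₂r hcen
  · rintro ⟨ε, B, Bp, hext, hcomm, ⟨ε₁, B₁, B₁p, q, hext₁, hq, hBq, hB₁q, hnc₁⟩, hii⟩
    refine ⟨q, ⟨hq, ?_⟩, ?_⟩
    · intro hcen
      exact hnc₁ (St13.commute_of_central hA h2 hext₁ hq hB₁q hcen)
    · rintro r ⟨hr, hncr⟩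
      by_contra hne
      obtain ⟨hpos, hneg⟩ := St13.parts_nonbot hA h2 hinv hncr
      obtain ⟨ε₂, B₂, B₂p, hext₂, hB₂A, hnc₂⟩ :=
        St13.noncommuting_extremal hA h2 hinv hr hpos hneg
      exact hnc₂ (hii ε₂ B₂ B₂p hext₂
        ⟨q, r, hq, hr, (fun h => hne h.symm), hBq, hB₂A⟩)
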